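/- arXiv:2007.09646 — 7 statements merged into one kernel-verified Lean document; each statement's English description precedes it below -/
import Mathlib

section
/- Let U be a finite-dimensional real vector space, Q a nondegenerate alternating bilinear form on U, and G a finite group of linear automorphisms of U preserving Q (i.e. Q(gx, gy) = Q(x, y) for all g ∈ G and x, y ∈ U). Then the fixed locus 𝔖(U,Q)^G = { J ∈ 𝔖(U,Q) : g ∘ J = J ∘ g for all g ∈ G }, viewed as a subset of the space of linear endomorphisms of U with its natural topology, is path-connected. -/
open RealInnerProductSpace Finset

set_option linter.unusedSectionVars false
set_option maxHeartbeats 1000000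

section Chart

variable {U : Type*} [NormedAddCommGroup U] [NormedSpace ℝ U] [FiniteDimensional ℝ U]

/-- injective CLM endo of a finite-dim space is a unit -/
lemma isUnit_of_injective_clm (f : U →L[ℝ] U) (hf : Function.Injective f) :
    IsUnit f := by
  have hbij : Function.Bijective (f : U →ₗ[ℝ] U) :=
    ⟨hf, LinearMap.injective_iff_surjective.mp hf⟩
  let e := LinearEquiv.ofBijective (f : U →ₗ[ℝ] U) hbij
  refine ⟨⟨f, LinearMap.toContinuousLinearMap (e.symm.toLinearMap), ?_, ?_⟩, rfl⟩
  · ext x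
    simp only [ContinuousLinearMap.mul_apply, ContinuousLinearMap.one_apply,
      ContinuousLinearMap.coe_comp', Function.comp_apply,
      LinearMap.coe_toContinuousLinearMap']
    exact e.apply_symm_apply x
  · ext x
    simp only [ContinuousLinearMap.mul_apply, ContinuousLinearMap.one_apply,
      ContinuousLinearMap.coe_comp', Function.comp_apply,
      LinearMap.coe_toContinuousLinearMap']
    exact e.symm_apply_apply x

variable (Q : LinearMap.BilinForm ℝ U) (K V J : U →L[ℝ] U)

/-- Membership part of the chart lemma. -/
lemma chart_mem
    (hK2 : ∀ x, K (K x) = -x)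
    (hKc : ∀ x y, Q (K x) (K y) = Q x y)
    (hVK : ∀ x, V (K x) = -K (V x))
    (hVs : ∀ x y, Q (V x) (K y) = Q x (K (V y)))
    (hVc : ∀ y, y ≠ 0 → Q (V y) (K (V y)) < Q y (K y))
    (hJe : ∀ x, J x - V (J x) = K x + V (K x)) :
    (∀ x, J (J x) = -x) ∧ (∀ x y, Q (J x) (J y) = Q x y) ∧
      (∀ x, x ≠ 0 → 0 < Q x (J x)) := by
  have hKV : ∀ z, K (V z) = -V (K z) := fun z => by rw [hVK z, neg_neg]
  -- injectivity of (1 - V)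
  have hm_inj : ∀ x y : U, x - V x = y - V y → x = y := by
    intro x y h
    by_contra hne
    have hd := hVc (x - y) (sub_ne_zero.mpr hne)
    have h2 : V (x - y) = x - y := by
      rw [map_sub]
      exact (sub_eq_sub_iff_sub_eq_sub.mp h).symm
    rw [h2] at hd
    exact lt_irrefl _ hd
  have hp_inj : ∀ x y : U, x + V x = y + V y → x = y := by
    intro x y h
    by_contra hne
    have hd := hVc (x - y) (sub_ne_zero.mpr hne)
    have h3 : x - y = V y - V x := sub_eq_sub_iff_add_eq_add.mpr (h.trans (add_comm _ _))
    have h2 : V (x - y) = -(x - y) := by rw [map_sub, h3, neg_sub]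
    rw [h2] at hd
    simp only [map_neg, LinearMap.map_neg₂, neg_neg, LinearMap.neg_apply] at hd
    exact lt_irrefl _ hd
  -- surjectivity of (1 - V) and (1 + V)
  have hm_surj : ∀ z : U, ∃ s, s - V s = z := by
    intro z
    have hinj : Function.Injective ((1 : U →L[ℝ] U) - V) := by
      intro x y h
      simp only [ContinuousLinearMap.sub_apply, ContinuousLinearMap.one_apply] at h
      exact hm_inj x y h
    obtain ⟨s, hs⟩ := LinearMap.injective_iff_surjective.mp
      (show Function.Injective (((1 : U →L[ℝ] U) - V) : U →ₗ[ℝ] U) from hinj) z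
    refine ⟨s, ?_⟩
    simpa [ContinuousLinearMap.sub_apply] using hs
  have hp_surj : ∀ z : U, ∃ s, s + V s = z := by
    intro z
    have hinj : Function.Injective ((1 : U →L[ℝ] U) + V) := by
      intro x y h
      simp only [ContinuousLinearMap.add_apply, ContinuousLinearMap.one_apply] at h
      exact hp_inj x y h
    obtain ⟨s, hs⟩ := LinearMap.injective_iff_surjective.mp
      (show Function.Injective (((1 : U →L[ℝ] U) + V) : U →ₗ[ℝ] U) from hinj) z
    refine ⟨s, ?_⟩
    simpa [ContinuousLinearMap.add_apply] using hs
  -- J in terms of preimages under (1 - V)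
  have hJs : ∀ x s : U, K x = s - V s → J x = s + V s := by
    intro x s hs
    apply hm_inj
    rw [hJe x, hs]
    simp only [map_add, map_sub]
    abel
  -- (a) J ∘ J = -1
  have ha : ∀ x, J (J x) = -x := by
    intro x
    have h2 : K (J x) + V (K (J x)) = -x + V x := by
      calc K (J x) + V (K (J x))
          = K (J x) - K (V (J x)) := by rw [hKV]; abel
        _ = K (J x - V (J x)) := by rw [map_sub]
        _ = K (K x + V (K x)) := by rw [hJe]
        _ = K (K x) + K (V (K x)) := by rw [map_add]
        _ = -x + V x := by rw [hKV, hK2, map_neg, neg_neg]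
    apply hm_inj
    rw [hJe (J x), h2, map_neg]
    abel
  -- antisymmetry of Q against K
  have hQK : ∀ a b : U, Q (K a) b = -Q a (K b) := by
    intro a b
    have hb : -K (K b) = b := by rw [hK2, neg_neg]
    nth_rewrite 1 [← hb]
    rw [map_neg, hKc]
  -- (b) antisymmetry of Q against J
  have hanti : ∀ x y, Q (J x) y = -Q x (J y) := by
    intro x y
    obtain ⟨s, hs⟩ := hm_surj (K x)
    obtain ⟨t, ht⟩ := hm_surj (K y)
    have hJx : J x = s + V s := hJs x s hs.symm
    have hJy : J y = t + V t := hJs y t ht.symm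
    have hx' : x = -K (s - V s) := by rw [hs, hK2, neg_neg]
    have hy' : y = -K (t - V t) := by rw [ht, hK2, neg_neg]
    rw [hJx, hJy, hy', hx']
    simp only [map_add, map_sub, map_neg, LinearMap.add_apply, LinearMap.sub_apply,
      LinearMap.neg_apply, LinearMap.map_neg₂, LinearMap.map_add₂, LinearMap.map_sub₂, hQK]
    linarith [hVs s t]
  have hb : ∀ x y, Q (J x) (J y) = Q x y := by
    intro x y
    rw [hanti x (J y), ha y, map_neg, neg_neg]
  -- (c) taming
  have hc : ∀ x, x ≠ 0 → 0 < Q x (J x) := by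
    intro x hx
    obtain ⟨y, hy⟩ := hp_surj x
    have hyne : y ≠ 0 := by
      intro h0
      apply hx
      rw [← hy, h0]
      simp
    have hJx : J x = K y + V (K y) := by
      apply hJs
      rw [← hy, map_add, hKV]
      abel
    rw [hJx, ← hy]
    have e1 := hVs y y
    have e2 := hVc y hyne
    simp only [map_add, LinearMap.add_apply, hVK, map_neg, LinearMap.map_neg₂,
      LinearMap.neg_apply]
    linarith
  exact ⟨ha, hb, hc⟩

/-- Commuting part of the chart lemma. -/
lemma chart_comm
    (hVc : ∀ y, y ≠ 0 → Q (V y) (K (V y)) < Q y (K y))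
    (hJe : ∀ x, J x - V (J x) = K x + V (K x))
    (g : U ≃ₗ[ℝ] U) (hgK : ∀ x, g (K x) = K (g x)) (hgV : ∀ x, g (V x) = V (g x)) :
    ∀ x, g (J x) = J (g x) := by
  have hm_inj : ∀ x y : U, x - V x = y - V y → x = y := by
    intro x y h
    by_contra hne
    have hd := hVc (x - y) (sub_ne_zero.mpr hne)
    have h2 : V (x - y) = x - y := by
      rw [map_sub]
      exact (sub_eq_sub_iff_sub_eq_sub.mp h).symm
    rw [h2] at hd
    exact lt_irrefl _ hd
  intro x
  apply hm_inj
  rw [hJe (g x), ← hgV (J x), ← map_sub g, hJe x, map_add g, hgK, hgV, hgK]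

/-- Coordinates (Cayley transform) of a Siegel point `J` with respect to base point `K`. -/
lemma exists_chart (hQskew : ∀ a b : U, Q a b = -Q b a)
    (hK2 : ∀ x, K (K x) = -x) (hKc : ∀ x y, Q (K x) (K y) = Q x y)
    (hKt : ∀ x, x ≠ 0 → 0 < Q x (K x))
    (hJ2 : ∀ x, J (J x) = -x) (hJc : ∀ x y, Q (J x) (J y) = Q x y)
    (hJt : ∀ x, x ≠ 0 → 0 < Q x (J x)) :
    ∃ W : U →L[ℝ] U,
      (∀ x, W (K x) = -K (W x)) ∧
      (∀ x y, Q (W x) (K y) = Q x (K (W y))) ∧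
      (∀ y, y ≠ 0 → Q (W y) (K (W y)) < Q y (K y)) ∧
      (∀ x, J x - W (J x) = K x + W (K x)) ∧
      (∀ g : U ≃ₗ[ℝ] U, (∀ x, g (K x) = K (g x)) → (∀ x, g (J x) = J (g x)) →
        ∀ x, g (W x) = W (g x)) := by
  have hQJ : ∀ a b : U, Q (J a) b = -Q a (J b) := by
    intro a b
    have hb : -J (J b) = b := by rw [hJ2, neg_neg]
    nth_rewrite 1 [← hb]
    rw [map_neg, hJc]
  have hQK : ∀ a b : U, Q (K a) b = -Q a (K b) := by
    intro a b
    have hb : -K (K b) = b := by rw [hK2, neg_neg]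
    nth_rewrite 1 [← hb]
    rw [map_neg, hKc]
  have hK0 : ∀ d : U, K d = 0 → d = 0 := by
    intro d hd
    have := hK2 d
    rw [hd, map_zero] at this
    simpa using this.symm
  -- the operator S - 1 = J∘K - 1 is injective
  set f : U →L[ℝ] U := J.comp K - 1 with hf
  have hf_app : ∀ a, f a = J (K a) - a := by
    intro a
    simp [hf, ContinuousLinearMap.sub_apply, ContinuousLinearMap.comp_apply]
  have hf_inj : Function.Injective f := by
    intro x y h
    by_contra hne
    set d := x - y with hd
    have hfd : J (K d) = d := by
      have : f d = 0 := by rw [map_sub, h, sub_self]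
      rw [hf_app] at this
      linear_combination (norm := abel) this
    have hKd : K d ≠ 0 := fun h0 => (sub_ne_zero.mpr hne) (hK0 d h0)
    have h1 := hJt (K d) hKd
    rw [hfd] at h1
    have h2 := hKt d (sub_ne_zero.mpr hne)
    have h3 := hQskew (K d) d
    linarith
  have hbij : Function.Bijective (f : U →ₗ[ℝ] U) :=
    ⟨hf_inj, LinearMap.injective_iff_surjective.mp hf_inj⟩
  set e : U ≃ₗ[ℝ] U := LinearEquiv.ofBijective (f : U →ₗ[ℝ] U) hbij with he_def
  have he : ∀ a, e a = J (K a) - a := by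
    intro a
    rw [he_def, LinearEquiv.ofBijective_apply]
    exact hf_app a
  set σ : U → U := fun z => e.symm z with hσ_def
  have hσadd : ∀ a b : U, σ (a + b) = σ a + σ b := fun a b => map_add e.symm a b
  have hσneg : ∀ a : U, σ (-a) = -σ a := fun a => map_neg e.symm a
  have hσ : ∀ z, J (K (σ z)) = z + σ z := by
    intro z
    have h1 : e (σ z) = z := e.apply_symm_apply z
    rw [he] at h1
    linear_combination (norm := abel) h1
  have hσeq : ∀ z a : U, z = e a → σ z = a := by
    intro z a hz
    show e.symm z = a
    rw [hz, e.symm_apply_apply]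
  set W : U →L[ℝ] U := (J.comp K + 1).comp (LinearMap.toContinuousLinearMap e.symm.toLinearMap)
    with hW_def
  have hW : ∀ z, W z = J (K (σ z)) + σ z := by
    intro z
    simp [hW_def, hσ_def, ContinuousLinearMap.comp_apply, ContinuousLinearMap.add_apply]
  have hW' : ∀ z, W z = z + σ z + σ z := by
    intro z
    rw [hW, hσ]
  -- σ anticommutation relations
  have hσK : ∀ z, σ (K z) = -K z - K (σ z) := by
    intro z
    apply hσeq
    have h1 : K (-K z - K (σ z)) = z + σ z := by
      rw [map_sub, map_neg, hK2, hK2]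
      abel
    rw [he, h1, ← hσ z, hJ2]
    abel
  have hσJ : ∀ x, σ (J x) = K (σ x) := by
    intro x
    apply hσeq
    rw [he, hK2, map_neg]
    have h3 := congrArg (⇑J) (hσ x)
    rw [hJ2, map_add] at h3
    rw [sub_eq_add_neg, h3]
    abel
  -- condition 1 : anticommutation
  have hC1 : ∀ z, W (K z) = -K (W z) := by
    intro z
    rw [hW' (K z), hW' z, hσK z, map_add, map_add]
    abel
  -- symmetry of S = J ∘ K
  have hSsym : ∀ s t : U, Q (J (K s)) (K t) = Q s (K (J (K t))) := by
    intro s t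
    rw [hQJ, hQK, neg_neg]
  -- symmetry of σ
  have hσsym : ∀ x y, Q (σ x) (K y) = Q x (K (σ y)) := by
    intro x y
    set s := σ x with hs
    set t := σ y with ht
    have hx : x = J (K s) - s := by rw [hσ x, ← hs]; abel
    have hy : y = J (K t) - t := by rw [hσ y, ← ht]; abel
    rw [hx, hy]
    simp only [map_add, map_sub, LinearMap.add_apply, LinearMap.sub_apply,
      LinearMap.map_add₂, LinearMap.map_sub₂]
    linarith [hSsym s t]
  -- condition 2 : symmetry
  have hC2 : ∀ x y, Q (W x) (K y) = Q x (K (W y)) := by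
    intro x y
    rw [hW' x, hW' y]
    simp only [map_add, LinearMap.add_apply, LinearMap.map_add₂]
    linarith [hσsym x y]
  -- condition 3 : contraction
  have hC3 : ∀ y, y ≠ 0 → Q (W y) (K (W y)) < Q y (K y) := by
    intro y hy0
    have hy : y = J (K (σ y)) - σ y := by rw [hσ y]; abel
    have ht0 : σ y ≠ 0 := by
      intro h0
      apply hy0
      rw [hy, h0, map_zero, map_zero, sub_zero]
    have hWy : W y = J (K (σ y)) + σ y := hW y
    have hKt0 : K (σ y) ≠ 0 := fun h0 => ht0 (hK0 _ h0)
    set t := σ y with ht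
    rw [hWy, hy]
    simp only [map_add, map_sub, LinearMap.add_apply, LinearMap.sub_apply,
      LinearMap.map_add₂, LinearMap.map_sub₂]
    have h1 := hJt (K t) hKt0
    have h2 := hQskew (J (K t)) (K t)
    have h3 := hSsym t t
    linarith
  -- condition 4 : the chart equation
  have hC4 : ∀ x, J x - W (J x) = K x + W (K x) := by
    intro x
    rw [hW' (J x), hW' (K x), hσJ x, hσK x]
    abel
  -- condition 5 : equivariance
  have hC5 : ∀ g : U ≃ₗ[ℝ] U, (∀ x, g (K x) = K (g x)) → (∀ x, g (J x) = J (g x)) →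
      ∀ x, g (W x) = W (g x) := by
    intro g hgK hgJ x
    have hσg : σ (g x) = g (σ x) := by
      apply hσeq
      rw [he, ← hgK, ← hgJ, ← map_sub g, hσ x, add_sub_cancel_right]
    rw [hW' x, hW' (g x), hσg, map_add, map_add]
  exact ⟨W, hC1, hC2, hC3, hC4, hC5⟩
end Chart


/-- Polar-decomposition construction of a compatible complex structure from an
invertible skew-adjoint operator, commuting with everything commuting with `A`. -/
lemma polar_exists {V : Type*} [NormedAddCommGroup V] [InnerProductSpace ℝ V]
    [FiniteDimensional ℝ V]
    (A : V →ₗ[ℝ] V) (hAsk : ∀ x y, ⟪A x, y⟫ = -⟪x, A y⟫) (hAinj : Function.Injective A) :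
    ∃ K : V →ₗ[ℝ] V, (∀ x, K (K x) = -x) ∧ (∀ x y, ⟪A (K x), K y⟫ = ⟪A x, y⟫) ∧
      (∀ x, x ≠ 0 → 0 < ⟪A x, K x⟫) ∧
      (∀ P : V →ₗ[ℝ] V, (∀ x, P (A x) = A (P x)) → ∀ x, P (K x) = K (P x)) := by
  classical
  set T : V →ₗ[ℝ] V := -(A ∘ₗ A) with hT_def
  have hT_app : ∀ x, T x = -A (A x) := fun x => rfl
  have hT : T.IsSymmetric := by
    intro x y
    rw [hT_app, hT_app, inner_neg_left, inner_neg_right, hAsk, neg_neg, hAsk]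
  set n := Module.finrank ℝ V with hn
  set b := hT.eigenvectorBasis rfl with hb
  set μ : Fin n → ℝ := hT.eigenvalues rfl with hμ
  have hTb : ∀ i, T (b i) = μ i • b i := by
    intro i
    have h := hT.apply_eigenvectorBasis (n := n) rfl i
    rw [← hb, ← hμ] at h
    exact_mod_cast h
  have hbnorm : ∀ i, ‖b i‖ = 1 := fun i => b.orthonormal.1 i
  have hbne : ∀ i, (b i : V) ≠ 0 := by
    intro i h0
    have := hbnorm i
    rw [h0] at this
    simp at this
  have hμpos : ∀ i, 0 < μ i := by
    intro i
    have h1 : ⟪T (b i), b i⟫ = μ i := by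
      rw [hTb i, real_inner_smul_left, real_inner_self_eq_norm_sq, hbnorm i]
      ring
    have h2 : 0 < ⟪T (b i), b i⟫ := by
      rw [hT_app, inner_neg_left, hAsk, neg_neg]
      have hA0 : A (b i) ≠ 0 := fun h => hbne i (hAinj (by simp [h]))
      rw [real_inner_self_eq_norm_sq]
      exact pow_pos (norm_pos_iff.mpr hA0) 2
    linarith [h1 ▸ h2]
  set B := b.toBasis with hB
  -- the square root of T
  set R : V →ₗ[ℝ] V := B.constr ℝ (fun i => Real.sqrt (μ i) • b i) with hR_def
  have hRb : ∀ i, R (b i) = Real.sqrt (μ i) • b i := by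
    intro i
    have := B.constr_basis ℝ (fun i => Real.sqrt (μ i) • b i) i
    rw [hR_def]
    simpa [hB] using this
  -- coordinates of diagonal operators
  have hdiag : ∀ (D : V →ₗ[ℝ] V) (d : Fin n → ℝ), (∀ i, D (b i) = d i • b i) →
      ∀ v i, B.repr (D v) i = d i * B.repr v i := by
    intro D d hD v i
    have hv : D v = ∑ j, (d j * B.repr v j) • b j := by
      conv_lhs => rw [← B.sum_repr v]
      rw [map_sum]
      refine Finset.sum_congr rfl fun j _ => ?_
      rw [map_smul]
      have : B j = b j := by simp [hB]
      rw [this, hD j, smul_smul, mul_comm]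
    rw [hv]
    have : ∀ j, (d j * B.repr v j) • b j = (d j * B.repr v j) • B j := by
      intro j; simp [hB]
    simp_rw [this]
    rw [B.repr_sum_self]
  have hTrepr := hdiag T μ hTb
  have hRrepr := hdiag R (fun i => Real.sqrt (μ i)) hRb
  -- R is a square root of T
  have hRR : ∀ v, R (R v) = T v := by
    intro v
    apply B.repr.injective
    ext i
    rw [hRrepr, hRrepr, hTrepr]
    rw [← mul_assoc, Real.mul_self_sqrt (hμpos i).le]
  -- eigenvector property: anything commuting with T commutes with R
  have hcomm : ∀ P : V →ₗ[ℝ] V, (∀ x, P (T x) = T (P x)) → ∀ x, P (R x) = R (P x) := by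
    intro P hP
    have key : ∀ (r : ℝ) (v : V), 0 < r → T v = r • v → R v = Real.sqrt r • v := by
      intro r v hr hv
      apply B.repr.injective
      ext i
      rw [hRrepr]
      have h1 : B.repr (T v) i = μ i * B.repr v i := hTrepr v i
      rw [hv, map_smul] at h1
      have h2 : Real.sqrt (μ i) * B.repr v i = Real.sqrt r * B.repr v i := by
        by_cases hc : B.repr v i = 0
        · rw [hc, mul_zero, mul_zero]
        · have : μ i = r := by
            have h3 : r * B.repr v i = μ i * B.repr v i := by simpa using h1
            exact (mul_right_cancel₀ hc h3).symm
          rw [this]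
      rw [h2, map_smul]
      simp
    intro x
    have hx : x = ∑ j, B.repr x j • b j := by
      conv_lhs => rw [← B.sum_repr x]
      refine Finset.sum_congr rfl fun j _ => by simp [hB]
    conv_lhs => rw [hx]
    conv_rhs => rw [hx]
    rw [map_sum, map_sum, map_sum]
    rw [map_sum]
    refine Finset.sum_congr rfl fun j _ => ?_
    rw [map_smul, map_smul, map_smul, map_smul, hRb j, map_smul]
    have hTPb : T (P (b j)) = μ j • P (b j) := by rw [← hP, hTb j, map_smul]
    rw [key (μ j) (P (b j)) (hμpos j) hTPb]
  -- inner product in coordinates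
  have hinner : ∀ x y : V, ⟪x, y⟫ = ∑ i, B.repr x i * B.repr y i := by
    intro x y
    rw [← b.repr.inner_map_map x y, PiLp.inner_apply]
    refine Finset.sum_congr rfl fun i _ => ?_
    rw [← b.coe_toBasis_repr_apply, ← b.coe_toBasis_repr_apply, ← hB]
    simp
    ring
  have hRsym : ∀ x y, ⟪R x, y⟫ = ⟪x, R y⟫ := by
    intro x y
    rw [hinner, hinner]
    refine Finset.sum_congr rfl fun i _ => ?_
    rw [hRrepr, hRrepr]
    ring
  have hRpos : ∀ x, x ≠ 0 → 0 < ⟪x, R x⟫ := by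
    intro x hx
    rw [hinner]
    have hex : ∃ i, B.repr x i ≠ 0 := by
      by_contra h
      push_neg at h
      apply hx
      have : B.repr x = 0 := by ext i; exact h i
      simpa using congrArg B.repr.symm this
    obtain ⟨i, hi⟩ := hex
    refine Finset.sum_pos' (fun j _ => ?_) ⟨i, Finset.mem_univ i, ?_⟩
    · rw [hRrepr]
      have : B.repr x j * (Real.sqrt (μ j) * B.repr x j) = Real.sqrt (μ j) * (B.repr x j)^2 := by
        ring
      rw [this]
      positivity
    · rw [hRrepr]
      have h1 : B.repr x i * (Real.sqrt (μ i) * B.repr x i) = Real.sqrt (μ i) * (B.repr x i)^2 := by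
        ring
      rw [h1]
      have := Real.sqrt_pos.mpr (hμpos i)
      positivity
  have hRinj : Function.Injective R := by
    intro x y h
    apply B.repr.injective
    ext i
    have h1 := congrArg (fun z => B.repr z i) h
    rw [hRrepr, hRrepr] at h1
    exact mul_left_cancel₀ (Real.sqrt_pos.mpr (hμpos i)).ne' h1
  have hRbij : Function.Bijective R := ⟨hRinj, LinearMap.injective_iff_surjective.mp hRinj⟩
  set eR : V ≃ₗ[ℝ] V := LinearEquiv.ofBijective R hRbij with heR
  set ρ : V → V := fun z => eR.symm z with hρ_def
  have hρR : ∀ z, R (ρ z) = z := by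
    intro z
    have := eR.apply_symm_apply z
    rw [heR] at this
    simpa [LinearEquiv.ofBijective_apply, hρ_def, heR] using this
  have hρinj : ∀ z w : V, R z = R w → z = w := fun z w h => hRinj h
  -- commutation of A with R and ρ
  have hAT : ∀ x, A (T x) = T (A x) := by
    intro x
    rw [hT_app, hT_app, map_neg]
  have hAR : ∀ x, A (R x) = R (A x) := hcomm A hAT
  have hAρ : ∀ z, A (ρ z) = ρ (A z) := by
    intro z
    apply hρinj
    rw [← hAR, hρR, hρR]
  -- the complex structure
  set K : V →ₗ[ℝ] V := A ∘ₗ (eR.symm : V →ₗ[ℝ] V) with hK_def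
  have hK_app : ∀ x, K x = A (ρ x) := fun x => rfl
  have hAAw : ∀ w, A (A w) = -T w := by
    intro w
    rw [hT_app, neg_neg]
  have hAK : ∀ x, A (K x) = -R x := by
    intro x
    rw [hK_app, hAAw, ← hRR, hρR]
  refine ⟨K, ?_, ?_, ?_, ?_⟩
  · intro x
    rw [hK_app, hK_app, ← hAρ, hAAw, ← hRR, hρR, hρR]
  · intro x y
    rw [hAK, hK_app, inner_neg_left]
    have h1 : ⟪R x, A (ρ y)⟫ = -⟪A (R x), ρ y⟫ := by rw [hAsk]; ring_nf
    rw [h1, neg_neg, hAR, hRsym, hρR]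
  · intro x hx
    rw [hK_app]
    have h1 : ⟪A x, A (ρ x)⟫ = -⟪x, A (A (ρ x))⟫ := hAsk x (A (ρ x))
    rw [h1, hAAw, ← hRR, hρR, inner_neg_right, neg_neg]
    exact hRpos x hx
  · intro P hPA
    have hPT : ∀ x, P (T x) = T (P x) := by
      intro x
      rw [hT_app, hT_app, map_neg, hPA, hPA]
    have hPR := hcomm P hPT
    have hPρ : ∀ z, P (ρ z) = ρ (P z) := by
      intro z
      apply hρinj
      rw [← hPR, hρR, hρR]
    intro x
    rw [hK_app, hK_app, hPA, hPρ]


/-- Type copy of `U` to carry the averaged inner product. -/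
def SiegelCopy (U : Type*) : Type _ := U

lemma exists_base {U : Type*} [NormedAddCommGroup U] [NormedSpace ℝ U] [FiniteDimensional ℝ U]
    (Q : LinearMap.BilinForm ℝ U) (hQalt : Q.IsAlt) (hQnd : Q.Nondegenerate)
    (G : Subgroup (U ≃ₗ[ℝ] U)) (hGfin : Finite G)
    (hGQ : ∀ g ∈ G, ∀ x y : U, Q (g x) (g y) = Q x y) :
    ∃ K : U →L[ℝ] U, (∀ x, K (K x) = -x) ∧ (∀ x y, Q (K x) (K y) = Q x y) ∧
      (∀ x, x ≠ 0 → 0 < Q x (K x)) ∧ (∀ g ∈ G, ∀ x, g (K x) = K (g x)) := by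
  classical
  letI : Fintype G := Fintype.ofFinite G
  set n := Module.finrank ℝ U with hn
  set c : U ≃ₗ[ℝ] (Fin n → ℝ) := (Module.finBasis ℝ U).equivFun with hc
  -- the averaged positive definite symmetric bilinear form
  set p : LinearMap.BilinForm ℝ U := LinearMap.mk₂ ℝ
    (fun x y => ∑ g : G, ∑ i, c ((g : U ≃ₗ[ℝ] U) x) i * c ((g : U ≃ₗ[ℝ] U) y) i)
    (by
      intro x x' y
      simp only [map_add, Pi.add_apply, add_mul, Finset.sum_add_distrib])
    (by
      intro r x y
      simp only [map_smul, Pi.smul_apply, smul_eq_mul, Finset.mul_sum, mul_assoc])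
    (by
      intro x y y'
      simp only [map_add, Pi.add_apply, mul_add, Finset.sum_add_distrib])
    (by
      intro r x y
      simp only [map_smul, Pi.smul_apply, smul_eq_mul, Finset.mul_sum]
      congr 1
      ext g
      congr 1
      ext i
      ring) with hp
  have hp_app : ∀ x y, p x y = ∑ g : G, ∑ i, c ((g : U ≃ₗ[ℝ] U) x) i * c ((g : U ≃ₗ[ℝ] U) y) i :=
    fun x y => rfl
  have hp_symm : ∀ x y, p x y = p y x := by
    intro x y
    rw [hp_app, hp_app]
    refine Finset.sum_congr rfl fun g _ => Finset.sum_congr rfl fun i _ => mul_comm _ _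
  have hp_nonneg : ∀ x, 0 ≤ p x x := by
    intro x
    rw [hp_app]
    refine Finset.sum_nonneg fun g _ => Finset.sum_nonneg fun i _ => mul_self_nonneg _
  have hp_pos : ∀ x, x ≠ 0 → 0 < p x x := by
    intro x hx
    rw [hp_app]
    have hcx : c x ≠ 0 := fun h => hx (by simpa using congrArg c.symm h)
    obtain ⟨i, hi⟩ : ∃ i, c x i ≠ 0 := by
      by_contra h
      push_neg at h
      exact hcx (funext h)
    refine Finset.sum_pos' (fun g _ => Finset.sum_nonneg fun j _ => mul_self_nonneg _)
      ⟨1, Finset.mem_univ _, ?_⟩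
    have h1 : ((1 : G) : U ≃ₗ[ℝ] U) x = x := rfl
    rw [h1]
    refine Finset.sum_pos' (fun j _ => mul_self_nonneg _) ⟨i, Finset.mem_univ i, ?_⟩
    exact mul_self_pos.mpr hi
  -- G-invariance of p
  have hp_inv : ∀ h ∈ G, ∀ x y, p ((h : U ≃ₗ[ℝ] U) x) ((h : U ≃ₗ[ℝ] U) y) = p x y := by
    intro h hh x y
    rw [hp_app, hp_app]
    set h' : G := ⟨h, hh⟩ with hh'
    have step : ∀ g : G,
        (∑ i, c ((g : U ≃ₗ[ℝ] U) (h x)) i * c ((g : U ≃ₗ[ℝ] U) (h y)) i)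
          = (fun k : G => ∑ i, c ((k : U ≃ₗ[ℝ] U) x) i * c ((k : U ≃ₗ[ℝ] U) y) i) (g * h') :=
      fun g => rfl
    calc (∑ g : G, ∑ i, c ((g : U ≃ₗ[ℝ] U) (h x)) i * c ((g : U ≃ₗ[ℝ] U) (h y)) i)
        = ∑ g : G, (fun k : G => ∑ i, c ((k : U ≃ₗ[ℝ] U) x) i * c ((k : U ≃ₗ[ℝ] U) y) i)
            ((Equiv.mulRight h') g) := Finset.sum_congr rfl fun g _ => step g
      _ = ∑ g : G, ∑ i, c ((g : U ≃ₗ[ℝ] U) x) i * c ((g : U ≃ₗ[ℝ] U) y) i :=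
          Equiv.sum_comp (Equiv.mulRight h')
            (fun k : G => ∑ i, c ((k : U ≃ₗ[ℝ] U) x) i * c ((k : U ≃ₗ[ℝ] U) y) i)
  have hp_nd : p.Nondegenerate := by
    refine ⟨fun x hx => ?_, fun x hx => ?_⟩
    all_goals by_contra h0
    all_goals exact (hp_pos x h0).ne' (hx x)
  -- the operator A with p(A x, y) = Q(x, y)
  set A : U →ₗ[ℝ] U := (p.toDual hp_nd).symm.toLinearMap ∘ₗ (Q : U →ₗ[ℝ] Module.Dual ℝ U)
    with hA_def
  have hA : ∀ x y, p (A x) y = Q x y := by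
    intro x y
    have h1 : p.toDual hp_nd (A x) = Q x := by
      show p.toDual hp_nd ((p.toDual hp_nd).symm (Q x)) = Q x
      exact (p.toDual hp_nd).apply_symm_apply _
    have h2 := congrArg (fun f => f y) h1
    simpa [LinearMap.BilinForm.toDual_def] using h2
  have hQskew : ∀ a b : U, Q a b = -Q b a := by
    intro a b
    rw [← hQalt.neg_eq b a]
  have hA_skew : ∀ x y, p (A x) y = -p x (A y) := by
    intro x y
    rw [hA, hQskew, ← hA, hp_symm]
  have hA_inj : Function.Injective A := by
    intro x y h
    have hsep := hQnd
    have : ∀ z, Q (x - y) z = 0 := by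
      intro z
      have h1 : p (A x) z = p (A y) z := by rw [h]
      rw [hA, hA] at h1
      simp only [map_sub, LinearMap.sub_apply, LinearMap.map_sub₂]
      rw [h1]
      ring
    have := hQnd.1 _ this
    exact sub_eq_zero.mp this
  have hA_comm : ∀ g ∈ G, ∀ x, A ((g : U ≃ₗ[ℝ] U) x) = (g : U ≃ₗ[ℝ] U) (A x) := by
    intro g hg x
    have hsub : ∀ z, p (A ((g : U ≃ₗ[ℝ] U) x) - (g : U ≃ₗ[ℝ] U) (A x)) z = 0 := by
      intro z
      have e1 : p (A ((g : U ≃ₗ[ℝ] U) x)) z = Q x (g.symm z) := by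
        rw [hA]
        have := hGQ g hg x (g.symm z)
        rw [g.apply_symm_apply] at this
        exact this
      have e2 : p ((g : U ≃ₗ[ℝ] U) (A x)) z = Q x (g.symm z) := by
        have := hp_inv g hg (A x) (g.symm z)
        rw [g.apply_symm_apply] at this
        rw [this, hA]
      simp only [LinearMap.map_sub₂]
      rw [e1, e2, sub_self]
    have := hp_nd.1 _ (fun z => hsub z)
    exact sub_eq_zero.mp this
  -- transport to the inner product space copy
  letI : AddCommGroup (SiegelCopy U) := inferInstanceAs (AddCommGroup U)
  letI : Module ℝ (SiegelCopy U) := inferInstanceAs (Module ℝ U)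
  let ι : U ≃ₗ[ℝ] SiegelCopy U :=
    { toFun := fun x => x, invFun := fun x => x, map_add' := fun _ _ => rfl,
      map_smul' := fun _ _ => rfl, left_inv := fun _ => rfl, right_inv := fun _ => rfl }
  let core : InnerProductSpace.Core ℝ (SiegelCopy U) :=
    { inner := fun x y => p (ι.symm x) (ι.symm y)
      conj_inner_symm := fun x y => by simpa using hp_symm (ι.symm y) (ι.symm x)
      re_inner_nonneg := fun x => by simpa using hp_nonneg (ι.symm x)
      definite := fun x hx => by
        by_contra h0
        have : (ι.symm x : U) ≠ 0 := fun h => h0 (by simpa using congrArg ι h)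
        exact (hp_pos _ this).ne' hx
      add_left := fun x y z => by simp [map_add, LinearMap.map_add₂, LinearMap.add_apply]
      smul_left := fun x y r => by simp [map_smul, LinearMap.map_smul₂, LinearMap.smul_apply] }
  letI : NormedAddCommGroup (SiegelCopy U) := core.toNormedAddCommGroup
  letI : InnerProductSpace ℝ (SiegelCopy U) := InnerProductSpace.ofCore core.toCore
  haveI : FiniteDimensional ℝ (SiegelCopy U) := LinearEquiv.finiteDimensional ι
  have hinner : ∀ x y : SiegelCopy U, ⟪x, y⟫ = p (ι.symm x) (ι.symm y) := fun _ _ => rfl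
  set Av : SiegelCopy U →ₗ[ℝ] SiegelCopy U :=
    ι.toLinearMap ∘ₗ A ∘ₗ ι.symm.toLinearMap with hAv_def
  have hAv_app : ∀ z, Av z = ι (A (ι.symm z)) := fun z => rfl
  have hAv_sk : ∀ x y : SiegelCopy U, ⟪Av x, y⟫ = -⟪x, Av y⟫ := by
    intro x y
    rw [hinner, hinner]
    show p (A (ι.symm x)) (ι.symm y) = -p (ι.symm x) (A (ι.symm y))
    exact hA_skew _ _
  have hAv_inj : Function.Injective Av := by
    intro x y h
    have : A (ι.symm x) = A (ι.symm y) := by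
      have := congrArg (fun z => (ι.symm z : U)) h
      exact this
    have := hA_inj this
    simpa using congrArg ι this
  obtain ⟨Kv, hKv2, hKvc, hKvt, hKvcomm⟩ := polar_exists Av hAv_sk hAv_inj
  set K0 : U →ₗ[ℝ] U := ι.symm.toLinearMap ∘ₗ Kv ∘ₗ ι.toLinearMap with hK0_def
  set K : U →L[ℝ] U := LinearMap.toContinuousLinearMap K0 with hK_def
  have hK_app : ∀ x, K x = ι.symm (Kv (ι x)) := fun x => rfl
  have hιK : ∀ x : U, ι (K x) = Kv (ι x) := fun x => by
    rw [hK_app]; exact ι.apply_symm_apply _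
  have hQp : ∀ x y : U, Q x y = ⟪Av (ι x), ι y⟫ := by
    intro x y
    rw [hinner]
    show Q x y = p (A x) y
    exact (hA x y).symm
  refine ⟨K, ?_, ?_, ?_, ?_⟩
  · intro x
    rw [hK_app, hK_app]
    have : Kv (ι (ι.symm (Kv (ι x)))) = Kv (Kv (ι x)) := by rw [ι.apply_symm_apply]
    rw [this, hKv2]
    simpa using map_neg ι.symm (ι x) ▸ congrArg ι.symm (rfl : (-(ι x) : SiegelCopy U) = -(ι x))
  · intro x y
    rw [hQp, hQp, hιK, hιK, hKvc]
  · intro x hx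
    rw [hQp, hιK]
    refine hKvt (ι x) fun h => hx ?_
    simpa using congrArg ι.symm h
  · intro g hg x
    set P : SiegelCopy U →ₗ[ℝ] SiegelCopy U :=
      ι.toLinearMap ∘ₗ (g : U ≃ₗ[ℝ] U).toLinearMap ∘ₗ ι.symm.toLinearMap with hP_def
    have hPA : ∀ z, P (Av z) = Av (P z) := by
      intro z
      show ι ((g : U ≃ₗ[ℝ] U) (ι.symm (ι (A (ι.symm z))))) = ι (A (ι.symm (ι ((g : U ≃ₗ[ℝ] U) (ι.symm z)))))
      rw [ι.symm_apply_apply, ι.symm_apply_apply]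
      exact congrArg ι (hA_comm g hg (ι.symm z)).symm
    have hcomm := hKvcomm P hPA
    have h1 := hcomm (ι x)
    show (g : U ≃ₗ[ℝ] U) (K x) = K ((g : U ≃ₗ[ℝ] U) x)
    rw [hK_app, hK_app]
    calc (g : U ≃ₗ[ℝ] U) (ι.symm (Kv (ι x)))
        = ι.symm (P (Kv (ι x))) := by
          show _ = ι.symm (ι ((g : U ≃ₗ[ℝ] U) (ι.symm (Kv (ι x)))))
          rw [ι.symm_apply_apply]
      _ = ι.symm (Kv (P (ι x))) := by rw [h1]
      _ = ι.symm (Kv (ι ((g : U ≃ₗ[ℝ] U) x))) := by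
          have : P (ι x) = ι ((g : U ≃ₗ[ℝ] U) x) := by
            show ι ((g : U ≃ₗ[ℝ] U) (ι.symm (ι x))) = _
            rw [ι.symm_apply_apply]
          rw [this]


/-- Let `U` be a finite-dimensional real vector space, `Q` a nondegenerate
alternating bilinear form on `U`, and `G` a finite group of linear automorphisms of `U`
preserving `Q`.  Then the fixed locus `𝔖(U,Q)^G`, i.e. the set of `J` in the Siegel
space `𝔖(U,Q)` commuting with every element of `G`, viewed inside the space of linear
endomorphisms of `U` with its natural topology, is path-connected. -/
theorem siegel_space_fixed_locus_pathConnected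
    (U : Type*) [NormedAddCommGroup U] [NormedSpace ℝ U] [FiniteDimensional ℝ U]
    (Q : LinearMap.BilinForm ℝ U) (hQalt : Q.IsAlt) (hQnd : Q.Nondegenerate)
    (G : Subgroup (U ≃ₗ[ℝ] U)) (hGfin : Finite G)
    (hGQ : ∀ g ∈ G, ∀ x y : U, Q (g x) (g y) = Q x y) :
    IsPathConnected {J : U →L[ℝ] U |
      (∀ x, J (J x) = -x) ∧
      (∀ x y, Q (J x) (J y) = Q x y) ∧
      (∀ x, x ≠ 0 → 0 < Q x (J x)) ∧
      (∀ g ∈ G, ∀ x, g (J x) = J (g x))} := by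
  classical
  obtain ⟨K, hK2, hKc, hKt, hKG⟩ := exists_base Q hQalt hQnd G hGfin hGQ
  have hQskew : ∀ a b : U, Q a b = -Q b a := by
    intro a b
    rw [← hQalt.neg_eq b a]
  have hKmem : K ∈ {J : U →L[ℝ] U |
      (∀ x, J (J x) = -x) ∧
      (∀ x y, Q (J x) (J y) = Q x y) ∧
      (∀ x, x ≠ 0 → 0 < Q x (J x)) ∧
      (∀ g ∈ G, ∀ x, g (J x) = J (g x))} := ⟨hK2, hKc, hKt, fun g hg x => hKG g hg x⟩
  refine ⟨K, hKmem, ?_⟩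
  intro J hJmem
  obtain ⟨hJ2, hJc, hJt, hJG⟩ := hJmem
  obtain ⟨W, hW1, hW2, hW3, hW4, hW5⟩ :=
    exists_chart Q K J hQskew hK2 hKc hKt hJ2 hJc hJt
  -- the path
  set Γ : ℝ → (U →L[ℝ] U) :=
    fun t => Ring.inverse ((1 : U →L[ℝ] U) - t • W) * (((1 : U →L[ℝ] U) + t • W) * K) with hΓ
  -- properties of the scaled chart parameter t • W
  have hV1 : ∀ t : ℝ, ∀ x, (t • W) (K x) = -K ((t • W) x) := by
    intro t x
    simp only [ContinuousLinearMap.smul_apply, hW1, map_smul, smul_neg]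
  have hV2 : ∀ t : ℝ, ∀ x y, Q ((t • W) x) (K y) = Q x (K ((t • W) y)) := by
    intro t x y
    simp only [ContinuousLinearMap.smul_apply, map_smul, LinearMap.map_smul₂,
      LinearMap.smul_apply, smul_eq_mul, hW2 x y]
  have hV3 : ∀ t : ℝ, 0 ≤ t → t ≤ 1 → ∀ y, y ≠ 0 →
      Q ((t • W) y) (K ((t • W) y)) < Q y (K y) := by
    intro t ht0 ht1 y hy
    by_cases hWy : W y = 0
    · simp only [ContinuousLinearMap.smul_apply, hWy, smul_zero, map_zero]
      simpa using hKt y hy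
    · have h1 : Q ((t • W) y) (K ((t • W) y)) = t * (t * Q (W y) (K (W y))) := by
        simp only [ContinuousLinearMap.smul_apply, map_smul, LinearMap.map_smul₂,
          LinearMap.smul_apply, smul_eq_mul]
      rw [h1]
      have h2 := hKt (W y) hWy
      have h3 := hW3 y hy
      have ht2 : t * t ≤ 1 := by nlinarith
      calc t * (t * Q (W y) (K (W y))) = (t * t) * Q (W y) (K (W y)) := by ring
        _ ≤ 1 * Q (W y) (K (W y)) := mul_le_mul_of_nonneg_right ht2 h2.le
        _ = Q (W y) (K (W y)) := one_mul _
        _ < Q y (K y) := h3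
  have hinj : ∀ t : ℝ, 0 ≤ t → t ≤ 1 →
      Function.Injective ((1 : U →L[ℝ] U) - t • W) := by
    intro t ht0 ht1 x y hxy
    by_contra hne
    have hd0 : x - y ≠ 0 := sub_ne_zero.mpr hne
    simp only [ContinuousLinearMap.sub_apply, ContinuousLinearMap.one_apply] at hxy
    have hd : x - y = (t • W) (x - y) := by
      have h4 : x - y = (t • W) x - (t • W) y := sub_eq_sub_iff_sub_eq_sub.mp hxy
      rw [map_sub]
      exact h4
    have h5 := hV3 t ht0 ht1 (x - y) hd0
    rw [← hd] at h5
    exact lt_irrefl _ h5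
  have hunit : ∀ t : ℝ, 0 ≤ t → t ≤ 1 → IsUnit ((1 : U →L[ℝ] U) - t • W) :=
    fun t ht0 ht1 => isUnit_of_injective_clm _ (hinj t ht0 ht1)
  -- the defining equation of Γ t
  have hmul : ∀ t : ℝ, 0 ≤ t → t ≤ 1 →
      ((1 : U →L[ℝ] U) - t • W) * Γ t = ((1 : U →L[ℝ] U) + t • W) * K := by
    intro t ht0 ht1
    have hu := hunit t ht0 ht1
    rw [hΓ]
    simp only
    rw [← hu.unit_spec, Ring.inverse_unit, Units.mul_inv_cancel_left]
  have hJeq : ∀ t : ℝ, 0 ≤ t → t ≤ 1 →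
      ∀ x, Γ t x - (t • W) (Γ t x) = K x + (t • W) (K x) := by
    intro t ht0 ht1 x
    have := congrArg (fun f : U →L[ℝ] U => f x) (hmul t ht0 ht1)
    simpa only [ContinuousLinearMap.mul_apply, ContinuousLinearMap.sub_apply,
      ContinuousLinearMap.add_apply, ContinuousLinearMap.one_apply] using this
  -- membership of the path in the set
  have hmem : ∀ t : ℝ, 0 ≤ t → t ≤ 1 → Γ t ∈ {J : U →L[ℝ] U |
      (∀ x, J (J x) = -x) ∧
      (∀ x y, Q (J x) (J y) = Q x y) ∧
      (∀ x, x ≠ 0 → 0 < Q x (J x)) ∧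
      (∀ g ∈ G, ∀ x, g (J x) = J (g x))} := by
    intro t ht0 ht1
    obtain ⟨m1, m2, m3⟩ := chart_mem Q K (t • W) (Γ t) hK2 hKc (hV1 t) (hV2 t)
      (hV3 t ht0 ht1) (hJeq t ht0 ht1)
    refine ⟨m1, m2, m3, ?_⟩
    intro g hg x
    have hgK := hKG g hg
    have hgJ := hJG g hg
    have hgW := hW5 g hgK hgJ
    have hgV : ∀ x, g ((t • W) x) = (t • W) (g x) := by
      intro z
      simp only [ContinuousLinearMap.smul_apply, map_smul, hgW z]
    exact chart_comm Q K (t • W) (Γ t) (hV3 t ht0 ht1) (hJeq t ht0 ht1) g hgK hgV x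
  -- endpoints
  have hΓ0 : Γ 0 = K := by
    rw [hΓ]
    simp
  have hΓ1 : Γ 1 = J := by
    have hu := hunit 1 zero_le_one le_rfl
    have h7 : ((1 : U →L[ℝ] U) - (1 : ℝ) • W) * J = ((1 : U →L[ℝ] U) + (1 : ℝ) • W) * K := by
      ext x
      simp only [ContinuousLinearMap.mul_apply, ContinuousLinearMap.sub_apply,
        ContinuousLinearMap.add_apply, ContinuousLinearMap.one_apply, one_smul,
        ContinuousLinearMap.smul_apply]
      exact hW4 x
    rw [hΓ]
    simp only
    rw [← h7, ← hu.unit_spec, Ring.inverse_unit, Units.inv_mul_cancel_left]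
  -- continuity
  have hco : ContinuousOn Γ (Set.Icc (0 : ℝ) 1) := by
    intro t ht
    apply ContinuousAt.continuousWithinAt
    have hu := hunit t ht.1 ht.2
    have c1 : ContinuousAt (fun s : ℝ => (1 : U →L[ℝ] U) - s • W) t :=
      (continuous_const.sub (continuous_id.smul continuous_const)).continuousAt
    have c2 : ContinuousAt (Ring.inverse : (U →L[ℝ] U) → (U →L[ℝ] U))
        ((1 : U →L[ℝ] U) - t • W) := by
      have := NormedRing.inverse_continuousAt hu.unit
      rwa [hu.unit_spec] at this
    have c3 : ContinuousAt (fun s : ℝ => ((1 : U →L[ℝ] U) + s • W) * K) t :=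
      (((continuous_const.add (continuous_id.smul continuous_const)).mul
        continuous_const)).continuousAt
    have c4 : ContinuousAt (fun s : ℝ => Ring.inverse ((1 : U →L[ℝ] U) - s • W)) t :=
      ContinuousAt.comp (g := Ring.inverse) (f := fun s : ℝ => (1 : U →L[ℝ] U) - s • W) (x := t) c2 c1
    exact c4.mul c3
  have hcontI : Continuous fun t : unitInterval => Γ t :=
    hco.comp_continuous continuous_subtype_val fun t => t.2
  exact ⟨{ toFun := fun t => Γ t, continuous_toFun := hcontI,
           source' := hΓ0, target' := hΓ1 },
    fun t => hmem t t.2.1 t.2.2⟩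
end

section
/- Let U be a finite-dimensional real vector space, Q a nondegenerate alternating bilinear form on U, and G a finite group of linear automorphisms of U preserving Q (i.e. Q(gx, gy) = Q(x, y) for all g ∈ G and x, y ∈ U). Then there exists J ∈ 𝔖(U,Q) commuting with every element of G, i.e. a linear endomorphism J of U with J ∘ J = −id, Q(Jx, Jy) = Q(x, y) for all x, y, Q(x, Jx) > 0 for all x ≠ 0, and g ∘ J = J ∘ g for all g ∈ G. In particular (taking G trivial) the Siegel space 𝔖(U,Q) is nonempty. -/
open LinearMap (BilinForm)
open scoped RealInnerProductSpace

/-- Let `U` be a finite-dimensional real vector space, `Q` a nondegenerate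
alternating bilinear form on `U`, and `G` a finite group of linear automorphisms of `U`
preserving `Q`.  Then there exists a complex structure `J ∈ 𝔖(U,Q)` (i.e. `J² = −id`,
`Q(Jx,Jy) = Q(x,y)` and `Q(x,Jx) > 0` for `x ≠ 0`) commuting with every element of `G`.
In particular (taking `G` trivial) the Siegel space `𝔖(U,Q)` is nonempty. -/
theorem exists_invariant_compatible_complex_structure
    (U : Type*) [AddCommGroup U] [Module ℝ U] [FiniteDimensional ℝ U]
    (Q : LinearMap.BilinForm ℝ U) (hQalt : Q.IsAlt) (hQnd : Q.Nondegenerate)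
    (G : Subgroup (U ≃ₗ[ℝ] U)) (hGfin : Finite G)
    (hGQ : ∀ g ∈ G, ∀ x y : U, Q (g x) (g y) = Q x y) :
    ∃ J : U →ₗ[ℝ] U,
      (∀ x, J (J x) = -x) ∧
      (∀ x y, Q (J x) (J y) = Q x y) ∧
      (∀ x, x ≠ 0 → 0 < Q x (J x)) ∧
      (∀ g ∈ G, ∀ x, g (J x) = J (g x)) := by
  classical
  have : Fintype G := Fintype.ofFinite G
  set n := Module.finrank ℝ U with hnn
  have hn : Module.finrank ℝ U = n := rfl
  let b : Module.Basis (Fin n) ℝ U := Module.finBasis ℝ U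
  -- the averaged G-invariant positive definite bilinear form
  let f : U → U → ℝ := fun x y =>
    ∑ g : G, ∑ i, b.repr ((g : U ≃ₗ[ℝ] U) x) i * b.repr ((g : U ≃ₗ[ℝ] U) y) i
  let Bb : BilinForm ℝ U := LinearMap.mk₂ ℝ f
    (by intro x x' y; simp [f, map_add, add_mul, Finset.sum_add_distrib])
    (by intro c x y; simp [f, map_smul, Finset.mul_sum, mul_assoc])
    (by intro x y y'; simp [f, map_add, mul_add, Finset.sum_add_distrib])
    (by intro c x y; simp [f, map_smul, Finset.mul_sum, mul_assoc]; ring_nf;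
        exact Finset.sum_congr rfl fun _ _ => Finset.sum_congr rfl fun _ _ => by ring)
  have hBapp : ∀ x y, Bb x y = f x y := fun x y => rfl
  have hBsymm : ∀ x y, Bb x y = Bb y x := by
    intro x y; simp only [hBapp, f]
    exact Finset.sum_congr rfl fun g _ => Finset.sum_congr rfl fun i _ => mul_comm _ _
  have hBpos : ∀ x : U, x ≠ 0 → 0 < Bb x x := by
    intro x hx
    rw [hBapp]
    apply Finset.sum_pos'
    · intro g _
      exact Finset.sum_nonneg fun i _ => mul_self_nonneg _
    · refine ⟨(1 : G), Finset.mem_univ _, ?_⟩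
      have h1 : ((1 : G) : U ≃ₗ[ℝ] U) x = x := rfl
      rw [h1]
      have hne : b.repr x ≠ 0 := fun h => hx (by simpa using congrArg b.repr.symm h)
      obtain ⟨i, hi⟩ : ∃ i, b.repr x i ≠ 0 := by
        by_contra h; push_neg at h; exact hne (Finsupp.ext h)
      exact Finset.sum_pos' (fun j _ => mul_self_nonneg _)
        ⟨i, Finset.mem_univ _, mul_self_pos.mpr hi⟩
  have hBnd : Bb.Nondegenerate := by
    constructor <;> intro x hx <;> by_contra h <;> exact absurd (hx x) (ne_of_gt (hBpos x h))
  -- G-invariance of Bb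
  have hBG : ∀ h ∈ G, ∀ x y : U, Bb (h x) (h y) = Bb x y := by
    intro h hh x y
    simp only [hBapp, f]
    exact Fintype.sum_equiv (Equiv.mulRight (⟨h, hh⟩ : G)) _ _ (fun g => rfl)
  -- the inner product space structure
  letI core : InnerProductSpace.Core ℝ U :=
    { inner := fun x y => Bb x y
      conj_inner_symm := fun x y => by simpa using hBsymm y x
      re_inner_nonneg := by
        intro x
        rcases eq_or_ne x 0 with rfl | hx
        · simp
        · exact le_of_lt (by simpa using hBpos x hx)
      add_left := fun x y z => by simp
      smul_left := fun x y r => by simp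
      definite := fun x hx => by
        by_contra h
        exact absurd hx (ne_of_gt (hBpos x h)) }
  letI : NormedAddCommGroup U := core.toNormedAddCommGroup
  letI : InnerProductSpace ℝ U := InnerProductSpace.ofCore core.toCore
  have hinner : ∀ x y : U, ⟪x, y⟫ = Bb x y := fun x y => rfl
  -- the operator A with ⟪A x, y⟫ = Q x y
  let A : U →ₗ[ℝ] U := (Bb.toDual hBnd).symm.toLinearMap ∘ₗ Q
  have hQA : ∀ x y : U, Bb (A x) y = Q x y := by
    intro x y
    exact LinearMap.BilinForm.apply_toDual_symm_apply (hB := hBnd) (Q x) y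
  have hAinj : ∀ x : U, A x = 0 → x = 0 := by
    intro x hx
    apply hQnd.1
    intro y
    rw [← hQA, hx]
    simp
  -- A commutes with G
  have hAg : ∀ g ∈ G, ∀ x, A (g x) = g (A x) := by
    intro g hg x
    have key : ∀ y, Bb (A (g x) - g (A x)) y = 0 := by
      intro y
      have h1 : Q (g x) y = Q x (g.symm y) := by
        conv_lhs => rw [← g.apply_symm_apply y]
        exact hGQ g hg x (g.symm y)
      have h2 : Bb (g (A x)) y = Bb (A x) (g.symm y) := by
        conv_lhs => rw [← g.apply_symm_apply y]
        exact hBG g hg (A x) (g.symm y)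
      have h3 : Bb (A (g x)) y = Q (g x) y := hQA _ _
      have h4 : Bb (A x) (g.symm y) = Q x (g.symm y) := hQA _ _
      rw [map_sub, LinearMap.sub_apply, h3, h2, h4, h1, sub_self]
    exact sub_eq_zero.mp (hBnd.1 _ key)
  -- skewness of A
  have hQneg : ∀ x y : U, Q x y = -(Q y x) := by
    intro x y
    have h := LinearMap.IsAlt.neg hQalt y x
    linarith
  have hskew : ∀ x y : U, Bb (A x) y = -(Bb x (A y)) := by
    intro x y
    rw [hQA x y, hQneg x y, ← hQA y x, hBsymm (A y) x]
  have hskew2 : ∀ x y : U, Bb x (A y) = -(Bb (A x) y) := by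
    intro x y
    have := hskew x y
    linarith
  -- P = -A² is symmetric positive definite
  let P : U →ₗ[ℝ] U := -(A ∘ₗ A)
  have hPapp : ∀ x, P x = -(A (A x)) := fun x => rfl
  have hAA : ∀ x, A (A x) = -(P x) := fun x => by rw [hPapp, neg_neg]
  have hBneg1 : ∀ x y : U, Bb (-x) y = -(Bb x y) := by
    intro x y; rw [map_neg, LinearMap.neg_apply]
  have hBneg2 : ∀ x y : U, Bb x (-y) = -(Bb x y) := fun x y => map_neg (Bb x) y
  have hPsym : P.IsSymmetric := by
    intro x y
    show Bb (P x) y = Bb x (P y)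
    have e1 : Bb (P x) y = Bb (A x) (A y) := by
      rw [hPapp, hBneg1, hskew (A x) y, neg_neg]
    have e2 : Bb x (P y) = Bb (A x) (A y) := by
      rw [hPapp, hBneg2, hskew2 x (A y), neg_neg]
    rw [e1, e2]
  have hPB : ∀ x, Bb (P x) x = Bb (A x) (A x) := by
    intro x
    rw [hPapp, hBneg1, hskew (A x) x, neg_neg, hBsymm]
  have hPpos : ∀ x : U, x ≠ 0 → 0 < Bb (P x) x := by
    intro x hx
    rw [hPB]
    apply hBpos
    intro h
    exact hx (hAinj x h)
  -- spectral theory of P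
  let e : OrthonormalBasis (Fin n) ℝ U := hPsym.eigenvectorBasis hn
  let mu : Fin n → ℝ := hPsym.eigenvalues hn
  have he : ∀ i, P (e i) = mu i • e i := by
    intro i
    simpa [e, mu] using hPsym.apply_eigenvectorBasis hn i
  have hcoe : ∀ i, e.toBasis i = e i := fun i => by simp
  have hei : ∀ i, (e i : U) ≠ 0 := by
    intro i
    rw [← hcoe i]
    exact e.toBasis.ne_zero i
  have hmupos : ∀ i, 0 < mu i := by
    intro i
    have h1 : Bb (P (e i)) (e i) = mu i * Bb (e i) (e i) := by
      rw [he i, map_smul]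
      simp
    have h2 : 0 < Bb (P (e i)) (e i) := hPpos _ (hei i)
    have h3 : 0 < Bb (e i) (e i) := hBpos _ (hei i)
    nlinarith
  set sq : Fin n → ℝ := fun i => Real.sqrt (mu i) with hsqdef
  have hsqpos : ∀ i, 0 < sq i := fun i => Real.sqrt_pos.mpr (hmupos i)
  have hsqsq : ∀ i, sq i * sq i = mu i := fun i => Real.mul_self_sqrt (hmupos i).le
  let S : U →ₗ[ℝ] U := e.toBasis.constr ℝ fun i => sq i • e i
  let S' : U →ₗ[ℝ] U := e.toBasis.constr ℝ fun i => (sq i)⁻¹ • e i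
  have hSe : ∀ i, S (e i) = sq i • e i := by
    intro i
    rw [← hcoe i]
    exact e.toBasis.constr_basis ℝ _ i
  have hS'e : ∀ i, S' (e i) = (sq i)⁻¹ • e i := by
    intro i
    rw [← hcoe i]
    exact e.toBasis.constr_basis ℝ _ i
  have hS'S : ∀ x, S' (S x) = x := by
    have heq : S' ∘ₗ S = LinearMap.id := by
      apply e.toBasis.ext
      intro i
      rw [hcoe i, LinearMap.comp_apply, hSe i, map_smul, hS'e i, smul_smul,
        mul_inv_cancel₀ (hsqpos i).ne']
      simp
    intro x
    exact DFunLike.congr_fun heq x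
  have hSS' : ∀ x, S (S' x) = x := by
    have heq : S ∘ₗ S' = LinearMap.id := by
      apply e.toBasis.ext
      intro i
      rw [hcoe i, LinearMap.comp_apply, hS'e i, map_smul, hSe i, smul_smul,
        inv_mul_cancel₀ (hsqpos i).ne']
      simp
    intro x
    exact DFunLike.congr_fun heq x
  have hSP : ∀ x, S (S x) = P x := by
    have heq : S ∘ₗ S = P := by
      apply e.toBasis.ext
      intro i
      rw [hcoe i, LinearMap.comp_apply, hSe i, map_smul, hSe i, smul_smul, hsqsq i, he i]
    intro x
    exact DFunLike.congr_fun heq x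
  -- expansion of S in the eigenbasis
  have hSexp : ∀ x : U, S x = ∑ i, (⟪e i, x⟫ * sq i) • e i := by
    intro x
    conv_lhs => rw [← e.sum_repr' x]
    rw [map_sum]
    exact Finset.sum_congr rfl fun i _ => by rw [map_smul, hSe i, smul_smul]
  -- eigenvectors of P are eigenvectors of S
  have hcoefEig : ∀ (c : ℝ) (x : U), P x = c • x → ∀ j, mu j * ⟪e j, x⟫ = c * ⟪e j, x⟫ := by
    intro c x hx j
    have h1 : ⟪P (e j), x⟫ = ⟪e j, P x⟫ := hPsym (e j) x
    rw [he j, hx, real_inner_smul_left, real_inner_smul_right] at h1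
    exact h1
  have hEig : ∀ (c : ℝ) (x : U), P x = c • x → S x = Real.sqrt c • x := by
    intro c x hx
    rw [hSexp x]
    conv_rhs => rw [← e.sum_repr' x, Finset.smul_sum]
    refine Finset.sum_congr rfl fun j _ => ?_
    rw [smul_smul]
    by_cases hj : ⟪e j, x⟫ = 0
    · rw [hj]; simp
    · have hmj : mu j = c := mul_right_cancel₀ hj (hcoefEig c x hx j)
      have : sq j = Real.sqrt c := by rw [hsqdef]; simp only []; rw [hmj]
      rw [this, mul_comm]
  -- anything commuting with P commutes with S
  have hCommS : ∀ T : U →ₗ[ℝ] U, (∀ z, T (P z) = P (T z)) → ∀ z, T (S z) = S (T z) := by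
    intro T hT
    have heq : T ∘ₗ S = S ∘ₗ T := by
      apply e.toBasis.ext
      intro i
      rw [hcoe i]
      simp only [LinearMap.comp_apply]
      rw [hSe i, map_smul]
      have hPT : P (T (e i)) = mu i • T (e i) := by rw [← hT, he i, map_smul]
      rw [hEig (mu i) (T (e i)) hPT]
    intro z
    exact DFunLike.congr_fun heq z
  have hCommS' : ∀ T : U →ₗ[ℝ] U, (∀ z, T (S z) = S (T z)) → ∀ z, T (S' z) = S' (T z) := by
    intro T hTS z
    calc T (S' z) = S' (S (T (S' z))) := (hS'S _).symm
      _ = S' (T (S (S' z))) := by rw [← hTS (S' z)]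
      _ = S' (T z) := by rw [hSS' z]
  have hAP : ∀ z, A (P z) = P (A z) := by
    intro z
    rw [hPapp, hPapp, map_neg]
  have hAS : ∀ z, A (S z) = S (A z) := hCommS A hAP
  have hAS' : ∀ z, A (S' z) = S' (A z) := hCommS' A hAS
  have hgP : ∀ g ∈ G, ∀ z, (g : U ≃ₗ[ℝ] U) (P z) = P (g z) := by
    intro g hg z
    rw [hPapp, hPapp, map_neg]
    rw [← hAg g hg (A z), ← hAg g hg z]
  have hgS : ∀ g ∈ G, ∀ z, (g : U ≃ₗ[ℝ] U) (S z) = S (g z) := by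
    intro g hg
    exact hCommS g.toLinearMap (hgP g hg)
  have hgS' : ∀ g ∈ G, ∀ z, (g : U ≃ₗ[ℝ] U) (S' z) = S' (g z) := by
    intro g hg
    exact hCommS' g.toLinearMap (hgS g hg)
  -- S is symmetric and positive
  have hSsym : ∀ x y : U, ⟪S x, y⟫ = ⟪x, S y⟫ := by
    intro x y
    rw [hSexp x, hSexp y, sum_inner, inner_sum]
    refine Finset.sum_congr rfl fun i _ => ?_
    rw [real_inner_smul_left, real_inner_smul_right, real_inner_comm x (e i)]
    ring
  have hSpos : ∀ x : U, x ≠ 0 → 0 < ⟪x, S x⟫ := by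
    intro x hx
    obtain ⟨i0, hi0⟩ : ∃ i, ⟪e i, x⟫ ≠ 0 := by
      by_contra h
      push_neg at h
      apply hx
      rw [← e.sum_repr' x]
      simp [h]
    rw [hSexp x, inner_sum]
    apply Finset.sum_pos'
    · intro i _
      rw [real_inner_smul_right, real_inner_comm x (e i)]
      nlinarith [(hsqpos i).le, mul_self_nonneg (⟪x, e i⟫ : ℝ)]
    · refine ⟨i0, Finset.mem_univ _, ?_⟩
      rw [real_inner_smul_right, real_inner_comm x (e i0)]
      have h1 := hsqpos i0
      have h2 : 0 < ⟪x, e i0⟫ * ⟪x, e i0⟫ :=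
        mul_self_pos.mpr (by rw [real_inner_comm]; exact hi0)
      nlinarith
  -- final assembly
  refine ⟨A ∘ₗ S', ?_, ?_, ?_, ?_⟩
  · -- J ∘ J = -id
    intro x
    show A (S' (A (S' x))) = -x
    calc A (S' (A (S' x))) = A (A (S' (S' x))) := by rw [← hAS' (S' x)]
      _ = -(P (S' (S' x))) := hAA _
      _ = -(S (S (S' (S' x)))) := by rw [hSP]
      _ = -(S (S' x)) := by rw [hSS' (S' x)]
      _ = -x := by rw [hSS' x]
  · -- Q-compatibility
    intro x y
    show Q (A (S' x)) (A (S' y)) = Q x y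
    have hAJ : A (A (S' x)) = -(S x) := by
      rw [hAA (S' x), ← hSP (S' x), hSS' x]
    have hsym' : Bb (S (A x)) (S' y) = Bb (A x) (S (S' y)) := by
      have h5 := hSsym (A x) (S' y)
      rw [hinner, hinner] at h5
      exact h5
    calc Q (A (S' x)) (A (S' y))
        = Bb (A (A (S' x))) (A (S' y)) := (hQA _ _).symm
      _ = Bb (-(S x)) (A (S' y)) := by rw [hAJ]
      _ = -(Bb (S x) (A (S' y))) := hBneg1 _ _
      _ = Bb (A (S x)) (S' y) := by rw [hskew2 (S x) (S' y), neg_neg]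
      _ = Bb (S (A x)) (S' y) := by rw [hAS]
      _ = Bb (A x) (S (S' y)) := hsym'
      _ = Bb (A x) y := by rw [hSS' y]
      _ = Q x y := hQA x y
  · -- positivity
    intro x hx
    show 0 < Q x (A (S' x))
    have h1 : Q x (A (S' x)) = Bb (A x) (A (S' x)) := (hQA _ _).symm
    have h2 : Bb (A x) (A (S' x)) = -(Bb (A (A x)) (S' x)) := hskew2 (A x) (S' x)
    have h4 : Bb (P x) (S' x) = Bb (S x) x := by
      rw [← hSP x]
      have h5 := hSsym (S x) (S' x)
      rw [hinner, hinner] at h5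
      rw [h5, hSS' x]
    have h6 : 0 < ⟪x, S x⟫ := hSpos x hx
    rw [hinner] at h6
    rw [h1, h2, hAA x, hBneg1, neg_neg, h4, hBsymm]
    exact h6
  · -- commutes with G
    intro g hg x
    show (g : U ≃ₗ[ℝ] U) (A (S' x)) = A (S' (g x))
    rw [← hAg g hg (S' x), ← hgS' g hg x]
end

section
/- Let U be a finite-dimensional real vector space and Q a nondegenerate alternating bilinear form on U. The symplectic group Sp(U,Q) = { T ∈ GL(U) : Q(Tx, Ty) = Q(x, y) for all x, y } acts transitively on the Siegel space by conjugation: for any J₁, J₂ ∈ 𝔖(U,Q) there exists T ∈ Sp(U,Q) with T ∘ J₁ ∘ T⁻¹ = J₂. -/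
open Complex Module

section Aux

variable {U : Type*} [AddCommGroup U] [Module ℝ U]
variable {Q : LinearMap.BilinForm ℝ U}

/-- A point of the Siegel space, bundled with all hypotheses. -/
structure SiegelAux (U : Type*) [AddCommGroup U] [Module ℝ U]
    (Q : LinearMap.BilinForm ℝ U) : Type _ where
  J : U →ₗ[ℝ] U
  hJ2 : ∀ x, J (J x) = -x
  hJQ : ∀ x y, Q (J x) (J y) = Q x y
  hpos : ∀ x, x ≠ 0 → 0 < Q x (J x)
  halt : Q.IsAlt

namespace SiegelAux

theorem QJ_left (s : SiegelAux U Q) (x y : U) : Q (s.J x) y = -Q x (s.J y) := by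
  have := s.hJQ (s.J x) y
  rw [s.hJ2] at this
  rw [← this, map_neg, LinearMap.neg_apply]

theorem Qskew (s : SiegelAux U Q) (x y : U) : Q y x = -Q x y := by
  have := s.halt.neg_eq x y
  linarith

/-- Type synonym carrying the complex structure -/
def Cpx (_s : SiegelAux U Q) : Type _ := U

variable (s : SiegelAux U Q)

instance : AddCommGroup s.Cpx := inferInstanceAs (AddCommGroup U)
instance : Module ℝ s.Cpx := inferInstanceAs (Module ℝ U)

def ofC : s.Cpx → U := fun x => x
def toC : U → s.Cpx := fun x => x

theorem ext' {a b : s.Cpx} (h : s.ofC a = s.ofC b) : a = b := h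
theorem ofC_toC (x : U) : s.ofC (s.toC x) = x := rfl
theorem ofC_add (a b : s.Cpx) : s.ofC (a + b) = s.ofC a + s.ofC b := rfl
theorem ofC_zero : s.ofC 0 = 0 := rfl
theorem ofC_rsmul (r : ℝ) (x : s.Cpx) : s.ofC (r • x) = r • s.ofC x := rfl
theorem toC_rsmul (r : ℝ) (x : U) : s.toC (r • x) = r • s.toC x := rfl

instance : SMul ℂ s.Cpx := ⟨fun z x => s.toC (z.re • s.ofC x + z.im • s.J (s.ofC x))⟩

theorem ofC_csmul (z : ℂ) (x : s.Cpx) :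
    s.ofC (z • x) = z.re • s.ofC x + z.im • s.J (s.ofC x) := rfl

instance : Module ℂ s.Cpx where
  one_smul x := s.ext' (by simp [ofC_csmul])
  mul_smul z w x := s.ext' (by
    simp only [ofC_csmul, Complex.mul_re, Complex.mul_im, map_add, map_smul, s.hJ2,
      smul_add, smul_smul, smul_neg, sub_smul, add_smul]
    abel)
  smul_zero z := s.ext' (by simp [ofC_csmul, ofC_zero])
  smul_add z x y := s.ext' (by
    simp only [ofC_csmul, ofC_add, map_add, smul_add]
    abel)
  add_smul z w x := s.ext' (by
    simp only [ofC_csmul, ofC_add, Complex.add_re, Complex.add_im, add_smul]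
    abel)
  zero_smul x := s.ext' (by simp [ofC_csmul, ofC_zero])

instance : IsScalarTower ℝ ℂ s.Cpx := by
  constructor
  intro r z x
  apply s.ext'
  simp [ofC_csmul, ofC_rsmul, smul_smul, smul_add]

theorem real_smul (r : ℝ) (x : s.Cpx) : (r : ℂ) • x = r • x := by
  apply s.ext'
  rw [s.ofC_csmul, s.ofC_rsmul]
  simp

theorem I_smul (x : s.Cpx) : (I : ℂ) • x = s.toC (s.J (s.ofC x)) := by
  apply s.ext'
  rw [s.ofC_csmul, s.ofC_toC]
  simp

noncomputable def core : InnerProductSpace.Core ℂ s.Cpx where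
  inner x y := ⟨Q (s.ofC x) (s.J (s.ofC y)), Q (s.ofC x) (s.ofC y)⟩
  conj_inner_symm x y := by
    apply Complex.ext
    · rw [Complex.conj_re]
      show Q (s.ofC y) (s.J (s.ofC x)) = Q (s.ofC x) (s.J (s.ofC y))
      rw [s.Qskew (s.J (s.ofC x)) (s.ofC y), s.QJ_left, neg_neg]
    · rw [Complex.conj_im]
      show -Q (s.ofC y) (s.ofC x) = Q (s.ofC x) (s.ofC y)
      rw [s.Qskew (s.ofC x) (s.ofC y), neg_neg]
  re_inner_nonneg x := by
    show (0:ℝ) ≤ Q (s.ofC x) (s.J (s.ofC x))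
    rcases eq_or_ne (s.ofC x) 0 with h | h
    · simp [h]
    · exact le_of_lt (s.hpos _ h)
  add_left x y z := by
    apply Complex.ext
    · rw [Complex.add_re]
      show Q (s.ofC (x + y)) (s.J (s.ofC z))
          = Q (s.ofC x) (s.J (s.ofC z)) + Q (s.ofC y) (s.J (s.ofC z))
      rw [s.ofC_add, map_add, LinearMap.add_apply]
    · rw [Complex.add_im]
      show Q (s.ofC (x + y)) (s.ofC z) = Q (s.ofC x) (s.ofC z) + Q (s.ofC y) (s.ofC z)
      rw [s.ofC_add, map_add, LinearMap.add_apply]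
  smul_left x y z := by
    apply Complex.ext
    · rw [Complex.mul_re, Complex.conj_re, Complex.conj_im]
      show Q (s.ofC (z • x)) (s.J (s.ofC y))
          = z.re * Q (s.ofC x) (s.J (s.ofC y)) - -z.im * Q (s.ofC x) (s.ofC y)
      rw [s.ofC_csmul]
      simp only [map_add, map_smul, LinearMap.add_apply, LinearMap.smul_apply,
        smul_eq_mul, s.hJQ]
      ring
    · rw [Complex.mul_im, Complex.conj_re, Complex.conj_im]
      show Q (s.ofC (z • x)) (s.ofC y)
          = z.re * Q (s.ofC x) (s.ofC y) + -z.im * Q (s.ofC x) (s.J (s.ofC y))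
      rw [s.ofC_csmul]
      simp only [map_add, map_smul, LinearMap.add_apply, LinearMap.smul_apply,
        smul_eq_mul, s.QJ_left]
      ring
  definite x hx := by
    apply s.ext'
    rw [s.ofC_zero]
    by_contra h
    have h1 : Q (s.ofC x) (s.J (s.ofC x)) = 0 := congrArg Complex.re hx
    linarith [s.hpos _ h]

noncomputable instance : NormedAddCommGroup s.Cpx := s.core.toNormedAddCommGroup

noncomputable instance : InnerProductSpace ℂ s.Cpx := InnerProductSpace.ofCore s.core.toCore

theorem inner_def (x y : s.Cpx) :
    (inner ℂ x y : ℂ) = ⟨Q (s.ofC x) (s.J (s.ofC y)), Q (s.ofC x) (s.ofC y)⟩ := rfl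

instance [FiniteDimensional ℝ U] : FiniteDimensional ℂ s.Cpx :=
  haveI : Module.Finite ℝ s.Cpx := ‹FiniteDimensional ℝ U›
  Module.Finite.of_restrictScalars_finite ℝ ℂ s.Cpx

theorem finrank_eq [FiniteDimensional ℝ U] :
    2 * finrank ℂ s.Cpx = finrank ℝ U := by
  haveI : Module.Finite ℝ s.Cpx := ‹FiniteDimensional ℝ U›
  have h1 : finrank ℝ ℂ * finrank ℂ s.Cpx = finrank ℝ s.Cpx :=
    finrank_mul_finrank ℝ ℂ s.Cpx
  have h3 : finrank ℝ s.Cpx = finrank ℝ U := rfl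
  rw [← h3, ← h1, Complex.finrank_real_complex]

end SiegelAux

end Aux

/-- Let `U` be a finite-dimensional real vector space and `Q` a
nondegenerate alternating bilinear form on `U`.  The symplectic group
`Sp(U,Q) = {T ∈ GL(U) : Q(Tx,Ty) = Q(x,y)}` acts transitively on the Siegel space by
conjugation: for any `J₁, J₂ ∈ 𝔖(U,Q)` there is `T ∈ Sp(U,Q)` with `T J₁ T⁻¹ = J₂`. -/
theorem symplectic_group_acts_transitively_on_siegel_space
    (U : Type*) [AddCommGroup U] [Module ℝ U] [FiniteDimensional ℝ U]
    (Q : LinearMap.BilinForm ℝ U) (hQalt : Q.IsAlt) (hQnd : Q.Nondegenerate)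
    (J₁ J₂ : U →ₗ[ℝ] U)
    (hJ₁2 : ∀ x, J₁ (J₁ x) = -x)
    (hJ₁Q : ∀ x y, Q (J₁ x) (J₁ y) = Q x y)
    (hJ₁pos : ∀ x, x ≠ 0 → 0 < Q x (J₁ x))
    (hJ₂2 : ∀ x, J₂ (J₂ x) = -x)
    (hJ₂Q : ∀ x y, Q (J₂ x) (J₂ y) = Q x y)
    (hJ₂pos : ∀ x, x ≠ 0 → 0 < Q x (J₂ x)) :
    ∃ T : U ≃ₗ[ℝ] U,
      (∀ x y, Q (T x) (T y) = Q x y) ∧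
      (∀ x, T (J₁ (T.symm x)) = J₂ x) := by
  set s₁ : SiegelAux U Q := ⟨J₁, hJ₁2, hJ₁Q, hJ₁pos, hQalt⟩ with hs₁
  set s₂ : SiegelAux U Q := ⟨J₂, hJ₂2, hJ₂Q, hJ₂pos, hQalt⟩ with hs₂
  have hdim : finrank ℂ s₁.Cpx = finrank ℂ s₂.Cpx := by
    have h1 := s₁.finrank_eq
    have h2 := s₂.finrank_eq
    omega
  let b₁ := stdOrthonormalBasis ℂ s₁.Cpx
  let b₂ := (stdOrthonormalBasis ℂ s₂.Cpx).reindex (finCongr hdim.symm)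
  let e : s₁.Cpx ≃ₗᵢ[ℂ] s₂.Cpx := b₁.repr.trans b₂.repr.symm
  let T : U ≃ₗ[ℝ] U :=
    { toFun := fun x => s₂.ofC (e (s₁.toC x))
      invFun := fun x => s₁.ofC (e.symm (s₂.toC x))
      map_add' := fun x y => congrArg s₂.ofC (e.map_add (s₁.toC x) (s₁.toC y))
      map_smul' := fun r x => by
        simp only [RingHom.id_apply]
        rw [show s₁.toC (r • x) = r • s₁.toC x from rfl, ← s₁.real_smul,
          e.map_smul, s₂.real_smul]
        rfl
      left_inv := fun x => congrArg s₁.ofC (e.symm_apply_apply (s₁.toC x))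
      right_inv := fun x => congrArg s₂.ofC (e.apply_symm_apply (s₂.toC x)) }
  refine ⟨T, ?_, ?_⟩
  · intro x y
    have h := e.inner_map_map (s₁.toC x) (s₁.toC y)
    show Q (s₂.ofC (e (s₁.toC x))) (s₂.ofC (e (s₁.toC y))) = Q x y
    exact congrArg Complex.im h
  · intro x
    show s₂.ofC (e (s₁.toC (J₁ (s₁.ofC (e.symm (s₂.toC x)))))) = J₂ x
    have h1 : s₁.toC (J₁ (s₁.ofC (e.symm (s₂.toC x)))) = (I : ℂ) • (e.symm (s₂.toC x)) :=
      (s₁.I_smul _).symm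
    rw [h1, e.map_smul, e.apply_symm_apply, s₂.I_smul, s₂.ofC_toC, s₂.ofC_toC]
end

section
/- Let U be a finite-dimensional real vector space and Q a nondegenerate alternating bilinear form on U. For every J ∈ 𝔖(U,Q), the stabilizer { T ∈ GL(U) : Q(Tx, Ty) = Q(x, y) for all x, y, and T ∘ J = J ∘ T } is a compact subset of the space of linear endomorphisms of U (with its natural topology), and it is a subgroup of GL(U). -/
/-- Let `U` be a finite-dimensional real vector space and `Q` a
nondegenerate alternating bilinear form on `U`.  For every `J` in the Siegel space
`𝔖(U,Q)`, the stabilizer `{T ∈ GL(U) : Q(Tx,Ty) = Q(x,y) and TJ = JT}` is a compact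
subset of the space of linear endomorphisms of `U` (with its natural topology), and it
is a subgroup of `GL(U)`: it contains the identity and is closed under composition and
inverses. -/
theorem siegel_space_stabilizer_compact_subgroup
    (U : Type*) [NormedAddCommGroup U] [NormedSpace ℝ U] [FiniteDimensional ℝ U]
    (Q : LinearMap.BilinForm ℝ U) (hQalt : Q.IsAlt) (hQnd : Q.Nondegenerate)
    (J : U →L[ℝ] U)
    (hJ2 : ∀ x, J (J x) = -x)
    (hJQ : ∀ x y, Q (J x) (J y) = Q x y)
    (hJpos : ∀ x, x ≠ 0 → 0 < Q x (J x)) :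
    let S : Set (U →L[ℝ] U) := {T | Function.Bijective T ∧
      (∀ x y, Q (T x) (T y) = Q x y) ∧ (∀ x, T (J x) = J (T x))}
    IsCompact S ∧
    (ContinuousLinearMap.id ℝ U ∈ S) ∧
    (∀ T₁ ∈ S, ∀ T₂ ∈ S, T₁.comp T₂ ∈ S) ∧
    (∀ T ∈ S, ∃ T' ∈ S, T.comp T' = ContinuousLinearMap.id ℝ U ∧
      T'.comp T = ContinuousLinearMap.id ℝ U) := by
  intro S
  -- Bijectivity is automatic from Q-preservation
  have hbij_auto : ∀ T : U →L[ℝ] U, (∀ x y, Q (T x) (T y) = Q x y) →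
      Function.Bijective T := by
    intro T hT
    have hinj : Function.Injective T := by
      intro a b hab
      have h0 : ∀ y, Q (a - b) y = 0 := by
        intro y
        have h1 : Q a y = Q (T a) (T y) := (hT a y).symm
        have h2 : Q b y = Q (T b) (T y) := (hT b y).symm
        simp [map_sub, LinearMap.sub_apply, h1, h2, hab]
      have := hQnd.1 (a - b) h0
      exact sub_eq_zero.mp this
    have hsurj : Function.Surjective T :=
      (LinearMap.injective_iff_surjective (f := (T : U →ₗ[ℝ] U))).mp hinj
    exact ⟨hinj, hsurj⟩
  -- a continuous version of Q
  let Q1 : U →ₗ[ℝ] (U →L[ℝ] ℝ) :=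
    { toFun := fun x => LinearMap.toContinuousLinearMap (Q x)
      map_add' := by intro x y; ext z; simp
      map_smul' := by intro c x; ext z; simp }
  let Qc : U →L[ℝ] (U →L[ℝ] ℝ) := LinearMap.toContinuousLinearMap Q1
  have hQc : ∀ x y, Qc x y = Q x y := fun x y => rfl
  -- the positive definite form f x = Q x (J x)
  set f : U → ℝ := fun x => Q x (J x) with hf
  have hf_cont : Continuous f := by
    have : Continuous fun x => Qc x (J x) :=
      Continuous.clm_apply Qc.continuous J.continuous
    exact this
  have hf_smul : ∀ (c : ℝ) (x : U), f (c • x) = c ^ 2 * f x := by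
    intro c x
    simp only [hf, map_smul, LinearMap.smul_apply, smul_eq_mul]
    ring
  -- upper bound for f
  have hf_upper : ∀ x, f x ≤ ‖Qc‖ * ‖J‖ * ‖x‖ ^ 2 := by
    intro x
    have h1 : f x ≤ ‖Qc x (J x)‖ := le_abs_self _
    have h2 : ‖Qc x (J x)‖ ≤ ‖Qc x‖ * ‖J x‖ := (Qc x).le_opNorm _
    have h3 : ‖Qc x‖ ≤ ‖Qc‖ * ‖x‖ := Qc.le_opNorm _
    have h4 : ‖J x‖ ≤ ‖J‖ * ‖x‖ := J.le_opNorm _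
    calc f x ≤ ‖Qc x‖ * ‖J x‖ := h1.trans h2
      _ ≤ (‖Qc‖ * ‖x‖) * (‖J‖ * ‖x‖) :=
        mul_le_mul h3 h4 (norm_nonneg _) (by positivity)
      _ = ‖Qc‖ * ‖J‖ * ‖x‖ ^ 2 := by ring
  -- lower bound for f
  have hf_lower : ∃ m > 0, ∀ x, m * ‖x‖ ^ 2 ≤ f x := by
    rcases subsingleton_or_nontrivial U with hU | hU
    · exact ⟨1, one_pos, fun x => by
        simp [Subsingleton.elim x 0, hf]⟩
    · have hsph : (Metric.sphere (0 : U) 1).Nonempty :=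
        NormedSpace.sphere_nonempty.mpr zero_le_one
      obtain ⟨x₀, hx₀, hx₀min'⟩ :=
        (isCompact_sphere (0 : U) 1).exists_isMinOn hsph hf_cont.continuousOn
      have hx₀min : ∀ u ∈ Metric.sphere (0 : U) 1, f x₀ ≤ f u := fun u hu => hx₀min' hu
      have hx₀ne : x₀ ≠ 0 := by
        intro h
        rw [h] at hx₀
        simp at hx₀
      refine ⟨f x₀, hJpos x₀ hx₀ne, fun x => ?_⟩
      rcases eq_or_ne x 0 with rfl | hx
      · simp [hf]
      · have hxn : ‖x‖ ≠ 0 := norm_ne_zero_iff.mpr hx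
        set u : U := ‖x‖⁻¹ • x with hu
        have hu1 : u ∈ Metric.sphere (0 : U) 1 := by
          simp [hu, norm_smul, abs_of_nonneg (inv_nonneg.mpr (norm_nonneg x)),
            inv_mul_cancel₀ hxn]
        have hfx : f x = ‖x‖ ^ 2 * f u := by
          have : x = ‖x‖ • u := by
            rw [hu, smul_smul, mul_inv_cancel₀ hxn, one_smul]
          calc f x = f (‖x‖ • u) := by rw [← this]
            _ = ‖x‖ ^ 2 * f u := hf_smul _ _
        rw [hfx]
        have := hx₀min u hu1
        nlinarith [sq_nonneg ‖x‖, norm_nonneg x]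
  obtain ⟨m, hm, hml⟩ := hf_lower
  -- f is invariant under elements of S
  have hf_inv : ∀ T : U →L[ℝ] U,
      (∀ x y, Q (T x) (T y) = Q x y) → (∀ x, T (J x) = J (T x)) →
      ∀ x, f (T x) = f x := by
    intro T hTQ hTJ x
    calc f (T x) = Q (T x) (J (T x)) := rfl
      _ = Q (T x) (T (J x)) := by rw [hTJ]
      _ = Q x (J x) := hTQ x (J x)
  -- S is bounded
  have hSbdd : Bornology.IsBounded S := by
    rw [isBounded_iff_forall_norm_le]
    refine ⟨Real.sqrt ((‖Qc‖ * ‖J‖) / m), fun T hT => ?_⟩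
    obtain ⟨-, hTQ, hTJ⟩ := hT
    refine T.opNorm_le_bound (Real.sqrt_nonneg _) fun x => ?_
    have h1 : m * ‖T x‖ ^ 2 ≤ f (T x) := hml (T x)
    have h2 : f (T x) = f x := hf_inv T hTQ hTJ x
    have h3 : f x ≤ ‖Qc‖ * ‖J‖ * ‖x‖ ^ 2 := hf_upper x
    have h4 : ‖T x‖ ^ 2 ≤ ((‖Qc‖ * ‖J‖) / m) * ‖x‖ ^ 2 := by
      rw [div_mul_eq_mul_div, le_div_iff₀ hm]
      nlinarith
    calc ‖T x‖ = Real.sqrt (‖T x‖ ^ 2) := (Real.sqrt_sq (norm_nonneg _)).symm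
      _ ≤ Real.sqrt (((‖Qc‖ * ‖J‖) / m) * ‖x‖ ^ 2) := Real.sqrt_le_sqrt h4
      _ = Real.sqrt ((‖Qc‖ * ‖J‖) / m) * ‖x‖ := by
        rw [Real.sqrt_mul (by positivity), Real.sqrt_sq (norm_nonneg _)]
  -- S is closed
  have hSeq : S = {T : U →L[ℝ] U |
      (∀ x y, Q (T x) (T y) = Q x y) ∧ (∀ x, T (J x) = J (T x))} := by
    ext T
    constructor
    · rintro ⟨-, h1, h2⟩; exact ⟨h1, h2⟩
    · rintro ⟨h1, h2⟩; exact ⟨hbij_auto T h1, h1, h2⟩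
  have hSclosed : IsClosed S := by
    rw [hSeq]
    have h1 : IsClosed {T : U →L[ℝ] U | ∀ x y, Q (T x) (T y) = Q x y} := by
      have : {T : U →L[ℝ] U | ∀ x y, Q (T x) (T y) = Q x y} =
          ⋂ x, ⋂ y, {T : U →L[ℝ] U | Qc (T x) (T y) = Q x y} := by
        ext T; simp only [Set.mem_setOf_eq, Set.mem_iInter]; rfl
      rw [this]
      refine isClosed_iInter fun x => isClosed_iInter fun y => ?_
      exact isClosed_eq
        (Continuous.clm_apply
          (Qc.continuous.comp (continuous_id.clm_apply continuous_const))
          (continuous_id.clm_apply continuous_const))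
        continuous_const
    have h2 : IsClosed {T : U →L[ℝ] U | ∀ x, T (J x) = J (T x)} := by
      have : {T : U →L[ℝ] U | ∀ x, T (J x) = J (T x)} =
          ⋂ x, {T : U →L[ℝ] U | T (J x) = J (T x)} := by
        ext T; simp only [Set.mem_setOf_eq, Set.mem_iInter]
      rw [this]
      refine isClosed_iInter fun x => ?_
      exact isClosed_eq (continuous_id.clm_apply continuous_const)
        (J.continuous.comp (continuous_id.clm_apply continuous_const))
    exact h1.inter h2
  constructor
  · exact Metric.isCompact_of_isClosed_isBounded hSclosed hSbdd
  refine ⟨⟨Function.bijective_id, by simp, by simp⟩, ?_, ?_⟩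
  · rintro T₁ ⟨hb₁, hQ₁, hJ₁⟩ T₂ ⟨hb₂, hQ₂, hJ₂'⟩
    refine ⟨hb₁.comp hb₂, fun x y => ?_, fun x => ?_⟩
    · simp only [ContinuousLinearMap.comp_apply]
      rw [hQ₁, hQ₂]
    · simp only [ContinuousLinearMap.comp_apply]
      rw [hJ₂', hJ₁]
  · rintro T ⟨hb, hTQ, hTJ⟩
    let e : U ≃ₗ[ℝ] U := LinearEquiv.ofBijective (T : U →ₗ[ℝ] U) hb
    let T' : U →L[ℝ] U := LinearMap.toContinuousLinearMap (e.symm : U →ₗ[ℝ] U)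
    have hTT' : ∀ x, T (T' x) = x := fun x => e.apply_symm_apply x
    have hT'T : ∀ x, T' (T x) = x := fun x => e.symm_apply_apply x
    have hT'Q : ∀ x y, Q (T' x) (T' y) = Q x y := by
      intro x y
      calc Q (T' x) (T' y) = Q (T (T' x)) (T (T' y)) := (hTQ _ _).symm
        _ = Q x y := by rw [hTT', hTT']
    have hT'J : ∀ x, T' (J x) = J (T' x) := by
      intro x
      calc T' (J x) = T' (J (T (T' x))) := by rw [hTT']
        _ = T' (T (J (T' x))) := by rw [hTJ]
        _ = J (T' x) := by rw [hT'T]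
    refine ⟨T', ⟨hbij_auto T' hT'Q, hT'Q, hT'J⟩, ?_, ?_⟩
    · ext x; exact hTT' x
    · ext x; exact hT'T x
end

section
/- Fix an integer g ≥ 1 and positive integers δ₁, …, δ_g, let Δ be the g × g diagonal matrix with entries δ₁, …, δ_g, and let Ω be the 2g × 2g integer matrix [[0, Δ], [−Δ, 0]]. Let 𝔖 be the set of real 2g × 2g matrices J with J² = −I, Jᵀ Ω J = Ω, and xᵀ Ω J x > 0 for all nonzero x ∈ ℝ^{2g}, and let Γ be the group of integer 2g × 2g matrices T (invertible over ℤ) with Tᵀ Ω T = Ω, acting on 𝔖 by T · J = T J T⁻¹. Then this action is properly discontinuous: for every compact subset K of 𝔖, the set { T ∈ Γ : (T · K) ∩ K ≠ ∅ } is finite. -/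
open Matrix

/-- Let `Δ = diag(δ₁,…,δ_g)` with `δᵢ > 0` and `Ω = [[0, Δ], [−Δ, 0]]`.
The integral symplectic group `Γ = {T ∈ GL_{2g}(ℤ) : Tᵀ Ω T = Ω}` acts properly
discontinuously on the Siegel space
`𝔖 = {J : J² = −I, Jᵀ Ω J = Ω, xᵀ Ω J x > 0 for x ≠ 0}` by `T · J = T J T⁻¹`:
for every compact `K ⊆ 𝔖` the set of `T ∈ Γ` with `(T·K) ∩ K ≠ ∅` is finite. -/
theorem integral_symplectic_action_properly_discontinuous
    (g : ℕ) (hg : 1 ≤ g) (δ : Fin g → ℤ) (hδ : ∀ i, 0 < δ i) :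
    let Δ : Matrix (Fin g) (Fin g) ℤ := Matrix.diagonal δ
    let Ω : Matrix (Fin g ⊕ Fin g) (Fin g ⊕ Fin g) ℤ := Matrix.fromBlocks 0 Δ (-Δ) 0
    let ΩR : Matrix (Fin g ⊕ Fin g) (Fin g ⊕ Fin g) ℝ := Ω.map (Int.cast : ℤ → ℝ)
    let 𝔖 : Set (Matrix (Fin g ⊕ Fin g) (Fin g ⊕ Fin g) ℝ) :=
      {J | J * J = -1 ∧ Jᵀ * ΩR * J = ΩR ∧
        ∀ x : Fin g ⊕ Fin g → ℝ, x ≠ 0 → 0 < x ⬝ᵥ ((ΩR * J) *ᵥ x)}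
    ∀ K : Set (Matrix (Fin g ⊕ Fin g) (Fin g ⊕ Fin g) ℝ), K ⊆ 𝔖 → IsCompact K →
      {T : Matrix (Fin g ⊕ Fin g) (Fin g ⊕ Fin g) ℤ |
        IsUnit T.det ∧ Tᵀ * Ω * T = Ω ∧
        ∃ J ∈ K, (T.map (Int.cast : ℤ → ℝ)) * J * (T.map (Int.cast : ℤ → ℝ))⁻¹ ∈ K}.Finite := by
  intro Δ Ω ΩR 𝔖 K hK hKc
  classical
  rcases K.eq_empty_or_nonempty with rfl | hKne
  · refine Set.Finite.subset Set.finite_empty ?_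
    rintro T ⟨-, -, J, hJ, -⟩
    exact absurd hJ (Set.notMem_empty J)
  -- positivity of the dot product square
  have hdotself : ∀ x : Fin g ⊕ Fin g → ℝ, x ≠ 0 → 0 < x ⬝ᵥ x := by
    intro x hx
    obtain ⟨i, hi⟩ : ∃ i, x i ≠ 0 := by
      by_contra h; push_neg at h; exact hx (funext h)
    exact Finset.sum_pos' (fun j _ => mul_self_nonneg _)
      ⟨i, Finset.mem_univ i, mul_self_pos.mpr hi⟩
  -- the unit sphere for the dot product is compact and nonempty
  set S : Set ((Fin g ⊕ Fin g) → ℝ) := {x | x ⬝ᵥ x = 1} with hSdef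
  have hScont : Continuous fun x : (Fin g ⊕ Fin g) → ℝ => x ⬝ᵥ x :=
    continuous_id.dotProduct continuous_id
  have hSclosed : IsClosed S := isClosed_eq hScont continuous_const
  have hSsub : S ⊆ Metric.closedBall 0 1 := by
    intro x hx
    simp only [Metric.mem_closedBall, dist_zero_right]
    refine pi_norm_le_iff_of_nonneg zero_le_one |>.mpr fun i => ?_
    have h1 : x i * x i ≤ x ⬝ᵥ x :=
      Finset.single_le_sum (fun j _ => mul_self_nonneg (x j)) (Finset.mem_univ i)
    rw [hx] at h1
    rw [Real.norm_eq_abs, abs_le]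
    constructor <;> nlinarith
  have hScompact : IsCompact S :=
    (isCompact_closedBall (0 : (Fin g ⊕ Fin g) → ℝ) 1).of_isClosed_subset hSclosed hSsub
  have hSne : S.Nonempty := by
    refine ⟨Pi.single (Sum.inl ⟨0, hg⟩) 1, ?_⟩
    simp [hSdef, single_dotProduct]
  -- the quadratic form, as a continuous function of (J, x)
  set φ : Matrix (Fin g ⊕ Fin g) (Fin g ⊕ Fin g) ℝ × ((Fin g ⊕ Fin g) → ℝ) → ℝ :=
    fun p => p.2 ⬝ᵥ ((ΩR * p.1) *ᵥ p.2) with hφdef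
  have hφc : Continuous φ :=
    continuous_snd.dotProduct
      ((continuous_const.matrix_mul continuous_fst).matrix_mulVec continuous_snd)
  have hKS : IsCompact (K ×ˢ S) := hKc.prod hScompact
  have hKSne : (K ×ˢ S).Nonempty := hKne.prod hSne
  obtain ⟨p0, hp0, hmin⟩ := hKS.exists_isMinOn hKSne hφc.continuousOn
  obtain ⟨p1, hp1, hmax⟩ := hKS.exists_isMaxOn hKSne hφc.continuousOn
  set c : ℝ := φ p0 with hcdef
  set C : ℝ := φ p1 with hCdef
  have hc : 0 < c := by
    have h1 := hK (Set.mem_prod.mp hp0).1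
    have h2 : p0.2 ∈ S := (Set.mem_prod.mp hp0).2
    have h3 : p0.2 ≠ 0 := by
      intro h
      rw [hSdef, Set.mem_setOf_eq, h] at h2
      simp [zero_dotProduct] at h2
    exact h1.2.2 p0.2 h3
  -- the key two-sided bound
  have key : ∀ J ∈ K, ∀ x : (Fin g ⊕ Fin g) → ℝ,
      c * (x ⬝ᵥ x) ≤ x ⬝ᵥ ((ΩR * J) *ᵥ x) ∧ x ⬝ᵥ ((ΩR * J) *ᵥ x) ≤ C * (x ⬝ᵥ x) := by
    intro J hJ x
    rcases eq_or_ne x 0 with rfl | hx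
    · simp [zero_dotProduct]
    · have hs : 0 < x ⬝ᵥ x := hdotself x hx
      set t : ℝ := Real.sqrt (x ⬝ᵥ x) with htdef
      have ht : 0 < t := Real.sqrt_pos.mpr hs
      have ht2 : t * t = x ⬝ᵥ x := Real.mul_self_sqrt hs.le
      set u : (Fin g ⊕ Fin g) → ℝ := t⁻¹ • x with hudef
      have hu : u ⬝ᵥ u = 1 := by
        rw [hudef, smul_dotProduct, dotProduct_smul, smul_eq_mul, smul_eq_mul]
        rw [← ht2]
        field_simp
      have huS : u ∈ S := hu
      have hφu : φ (J, u) = (t * t)⁻¹ * (x ⬝ᵥ ((ΩR * J) *ᵥ x)) := by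
        rw [hφdef]
        simp only [hudef, Matrix.mulVec_smul, smul_dotProduct, dotProduct_smul,
          smul_eq_mul]
        ring
      have hmem : (J, u) ∈ K ×ˢ S := Set.mem_prod.mpr ⟨hJ, huS⟩
      have h1 : c ≤ φ (J, u) := hmin hmem
      have h2 : φ (J, u) ≤ C := hmax hmem
      rw [hφu, ht2] at h1 h2
      constructor
      · calc c * (x ⬝ᵥ x) ≤ ((x ⬝ᵥ x)⁻¹ * (x ⬝ᵥ ((ΩR * J) *ᵥ x))) * (x ⬝ᵥ x) := by
              exact mul_le_mul_of_nonneg_right h1 hs.le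
          _ = x ⬝ᵥ ((ΩR * J) *ᵥ x) := by field_simp
      · calc x ⬝ᵥ ((ΩR * J) *ᵥ x) = ((x ⬝ᵥ x)⁻¹ * (x ⬝ᵥ ((ΩR * J) *ᵥ x))) * (x ⬝ᵥ x) := by
              field_simp
          _ ≤ C * (x ⬝ᵥ x) := mul_le_mul_of_nonneg_right h2 hs.le
  -- the entry bound
  set b : ℤ := ⌈C / c⌉ with hbdef
  have hbnn : 0 ≤ b := by
    have : c ≤ C := le_trans (hmin hp1) (le_of_eq rfl)
    have h0 : (0:ℝ) < C / c := div_pos (lt_of_lt_of_le hc this) hc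
    exact_mod_cast (Int.ceil_nonneg h0.le)
  have hsubset : {T : Matrix (Fin g ⊕ Fin g) (Fin g ⊕ Fin g) ℤ |
        IsUnit T.det ∧ Tᵀ * Ω * T = Ω ∧
        ∃ J ∈ K, (T.map (Int.cast : ℤ → ℝ)) * J * (T.map (Int.cast : ℤ → ℝ))⁻¹ ∈ K} ⊆
      Set.pi Set.univ (fun _ : Fin g ⊕ Fin g =>
        Set.pi Set.univ (fun _ : Fin g ⊕ Fin g => Set.Icc (-b) b)) := by
    rintro T ⟨hu, hsymp, J, hJ, hJ'⟩
    set A := T.map (Int.cast : ℤ → ℝ) with hAdef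
    have hAu : IsUnit A.det := by
      have : A.det = ((T.det : ℤ) : ℝ) := ((Int.castRingHom ℝ).map_det T).symm
      rw [this]
      exact hu.map (Int.castRingHom ℝ)
    have hinv : A⁻¹ * A = 1 := Matrix.nonsing_inv_mul A hAu
    have hA : Aᵀ * ΩR * A = ΩR := by
      have h := congrArg (fun M : Matrix _ _ ℤ => M.map ⇑(Int.castRingHom ℝ)) hsymp
      simp only [Matrix.map_mul, Matrix.transpose_map] at h
      exact h
    set J' := A * J * A⁻¹ with hJ'def
    have hQ : Aᵀ * (ΩR * J') * A = ΩR * J := by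
      have h1 : Aᵀ * (ΩR * J') * A = (Aᵀ * ΩR * A) * J * (A⁻¹ * A) := by
        rw [hJ'def]; simp only [Matrix.mul_assoc]
      rw [h1, hA, hinv, Matrix.mul_one]
    have hform : ∀ x : (Fin g ⊕ Fin g) → ℝ,
        (A *ᵥ x) ⬝ᵥ ((ΩR * J') *ᵥ (A *ᵥ x)) = x ⬝ᵥ ((ΩR * J) *ᵥ x) := by
      intro x
      rw [← hQ]
      rw [Matrix.mulVec_mulVec, Matrix.dotProduct_mulVec, Matrix.dotProduct_mulVec,
        ← Matrix.vecMul_transpose, Matrix.vecMul_vecMul]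
      simp only [Matrix.mul_assoc]
    intro i _
    intro j _
    -- bound on entry (i, j)
    set e : (Fin g ⊕ Fin g) → ℝ := Pi.single j 1 with hedef
    have hee : e ⬝ᵥ e = 1 := by simp [hedef, single_dotProduct]
    have hupper : e ⬝ᵥ ((ΩR * J) *ᵥ e) ≤ C := by
      have := (key J hJ e).2
      rwa [hee, mul_one] at this
    have hlower : c * ((A *ᵥ e) ⬝ᵥ (A *ᵥ e)) ≤ e ⬝ᵥ ((ΩR * J) *ᵥ e) := by
      rw [← hform e]
      exact (key J' hJ' (A *ᵥ e)).1
    have hAe : ∀ k, (A *ᵥ e) k = ((T k j : ℤ) : ℝ) := by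
      intro k
      simp [hedef, hAdef, Matrix.mulVec_single]
    have hsum : ((T i j : ℤ) : ℝ) * ((T i j : ℤ) : ℝ) ≤ (A *ᵥ e) ⬝ᵥ (A *ᵥ e) := by
      have h := Finset.single_le_sum (f := fun k => (A *ᵥ e) k * (A *ᵥ e) k)
        (fun k _ => mul_self_nonneg _) (Finset.mem_univ i)
      simpa [dotProduct, hAe i] using h
    have hbound : ((T i j : ℤ) : ℝ) * ((T i j : ℤ) : ℝ) ≤ C / c := by
      rw [le_div_iff₀ hc]
      calc ((T i j : ℤ) : ℝ) * ((T i j : ℤ) : ℝ) * c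
          = c * (((T i j : ℤ) : ℝ) * ((T i j : ℤ) : ℝ)) := by ring
        _ ≤ c * ((A *ᵥ e) ⬝ᵥ (A *ᵥ e)) := by
            exact mul_le_mul_of_nonneg_left hsum hc.le
        _ ≤ e ⬝ᵥ ((ΩR * J) *ᵥ e) := hlower
        _ ≤ C := hupper
    have hz : T i j * T i j ≤ b := by
      have h1 : ((T i j * T i j : ℤ) : ℝ) ≤ C / c := by push_cast; exact hbound
      have h2 : (C / c : ℝ) ≤ (b : ℝ) := Int.le_ceil _
      exact_mod_cast h1.trans h2
    have habs : |T i j| ≤ b := by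
      rcases eq_or_ne (T i j) 0 with h | h
      · simpa [h] using hbnn
      · have h1 : 1 ≤ |T i j| := Int.one_le_abs h
        nlinarith [abs_nonneg (T i j), abs_mul_abs_self (T i j)]
    simp only [Set.mem_Icc]
    exact abs_le.mp habs
  refine Set.Finite.subset ?_ hsubset
  exact Set.Finite.pi (fun i => Set.Finite.pi (fun j => Set.finite_Icc _ _))
end

section
/- Let a group G act linearly on a complex vector space V, let v, w ∈ V be nonzero, and suppose that the symmetric 2-tensor t = v ⊗ w + w ⊗ v spans a G-stable line in V ⊗ V (for instance, t is G-invariant). Then every g ∈ G either maps span{v} onto span{v} and span{w} onto span{w}, or maps span{v} onto span{w} and span{w} onto span{v}. -/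
open scoped TensorProduct

-- auxiliary: functional in first slot
private lemma aux_mem_span {V : Type*} [AddCommGroup V] [Module ℂ V]
    (x y u1 u2 : V) (hy : y ≠ 0) (c : ℂ)
    (heq : x ⊗ₜ[ℂ] y + y ⊗ₜ[ℂ] x = c • (u1 ⊗ₜ[ℂ] u2 + u2 ⊗ₜ[ℂ] u1)) :
    x ∈ Submodule.span ℂ {u1, u2} := by
  by_contra hx
  obtain ⟨f, hfx, hfp⟩ :=
    Submodule.exists_dual_map_eq_bot_of_notMem hx inferInstance
  have h1 : f u1 = 0 := by
    have : f u1 ∈ Submodule.map f (Submodule.span ℂ {u1, u2}) :=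
      ⟨u1, Submodule.subset_span (by simp), rfl⟩
    rw [hfp] at this; simpa using this
  have h2 : f u2 = 0 := by
    have : f u2 ∈ Submodule.map f (Submodule.span ℂ {u1, u2}) :=
      ⟨u2, Submodule.subset_span (by simp), rfl⟩
    rw [hfp] at this; simpa using this
  -- apply f ⊗ id
  have E1 := congrArg (fun t => (TensorProduct.lid ℂ V) (TensorProduct.map f LinearMap.id t)) heq
  simp only [map_add, map_smul, TensorProduct.map_tmul, TensorProduct.lid_tmul,
    LinearMap.id_coe, id_eq, h1, h2, zero_smul, add_zero, smul_zero] at E1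
  -- E1 : f x • y + f y • x = 0
  have E2 := congrArg f E1
  simp only [map_add, map_smul, map_zero, smul_eq_mul] at E2
  have hfy : f y = 0 := by
    have h2 : (2:ℂ) * (f x * f y) = 0 := by linear_combination E2
    have h3 : f x * f y = 0 := by
      rcases mul_eq_zero.mp h2 with h | h
      · norm_num at h
      · exact h
    exact (mul_eq_zero.mp h3).resolve_left hfx
  rw [hfy, zero_smul, add_zero] at E1
  exact hy (by simpa [smul_eq_zero, hfx] using E1)

/-- If a group `G` acts linearly on a complex vector space `V`, `v, w ∈ V`
are nonzero, and the symmetric 2-tensor `t = v ⊗ w + w ⊗ v` spans a `G`-stable line in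
`V ⊗ V` (i.e. each `g` sends `t` to a scalar multiple of `t`), then every `g ∈ G` either
maps `span{v}` onto `span{v}` and `span{w}` onto `span{w}`, or maps `span{v}` onto
`span{w}` and `span{w}` onto `span{v}`. -/
theorem stable_line_decomposable_tensor_swaps_factor_lines
    (G V : Type*) [Group G] [AddCommGroup V] [Module ℂ V]
    (ρ : Representation ℂ G V) (v w : V) (hv : v ≠ 0) (hw : w ≠ 0)
    (hline : ∀ g : G, ∃ c : ℂ,
      TensorProduct.map (ρ g) (ρ g) (v ⊗ₜ[ℂ] w + w ⊗ₜ[ℂ] v) =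
        c • (v ⊗ₜ[ℂ] w + w ⊗ₜ[ℂ] v)) :
    ∀ g : G,
      (Submodule.map (ρ g) (Submodule.span ℂ {v}) = Submodule.span ℂ {v} ∧
        Submodule.map (ρ g) (Submodule.span ℂ {w}) = Submodule.span ℂ {w}) ∨
      (Submodule.map (ρ g) (Submodule.span ℂ {v}) = Submodule.span ℂ {w} ∧
        Submodule.map (ρ g) (Submodule.span ℂ {w}) = Submodule.span ℂ {v}) := by
  intro g
  -- injectivity of ρ g
  have hinj : ∀ u : V, ρ g u = 0 → u = 0 := by
    intro u hu
    have h1 : ρ g⁻¹ (ρ g u) = u := by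
      have : ρ g⁻¹ * ρ g = 1 := by rw [← map_mul]; simp
      calc ρ g⁻¹ (ρ g u) = (ρ g⁻¹ * ρ g) u := rfl
        _ = u := by rw [this]; rfl
    rw [hu, map_zero] at h1
    exact h1.symm
  set x := ρ g v with hxdef
  set y := ρ g w with hydef
  have hx0 : x ≠ 0 := fun h => hv (hinj v h)
  have hy0 : y ≠ 0 := fun h => hw (hinj w h)
  obtain ⟨c, hc⟩ := hline g
  simp only [map_add, TensorProduct.map_tmul] at hc
  -- hc : x ⊗ y + y ⊗ x = c • (v ⊗ w + w ⊗ v)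
  have mapv : Submodule.map (ρ g) (Submodule.span ℂ {v}) = Submodule.span ℂ {x} := by
    rw [Submodule.map_span, Set.image_singleton]
  have mapw : Submodule.map (ρ g) (Submodule.span ℂ {w}) = Submodule.span ℂ {y} := by
    rw [Submodule.map_span, Set.image_singleton]
  have spansmul : ∀ (a : ℂ) (u : V), a ≠ 0 →
      Submodule.span ℂ {a • u} = Submodule.span ℂ {u} := by
    intro a u ha
    exact Submodule.span_singleton_smul_eq (isUnit_iff_ne_zero.mpr ha) u
  by_cases hdep : w ∈ Submodule.span ℂ {v}
  · -- dependent case : w = l • v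
    obtain ⟨l, hl⟩ := Submodule.mem_span_singleton.mp hdep
    have hl0 : l ≠ 0 := fun h => hw (by rw [← hl, h, zero_smul])
    have heq' : x ⊗ₜ[ℂ] y + y ⊗ₜ[ℂ] x = (c * l) • (v ⊗ₜ[ℂ] v + v ⊗ₜ[ℂ] v) := by
      rw [hc, ← hl]
      simp [TensorProduct.tmul_smul, TensorProduct.smul_tmul', smul_smul, mul_comm]
    have heq'' : y ⊗ₜ[ℂ] x + x ⊗ₜ[ℂ] y = (c * l) • (v ⊗ₜ[ℂ] v + v ⊗ₜ[ℂ] v) := by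
      rw [add_comm]; exact heq'
    have hxv : x ∈ Submodule.span ℂ {v} := by
      have := aux_mem_span x y v v hy0 (c * l) heq'
      simpa [Set.pair_eq_singleton] using this
    have hyv : y ∈ Submodule.span ℂ {v} := by
      have := aux_mem_span y x v v hx0 (c * l) heq''
      simpa [Set.pair_eq_singleton] using this
    obtain ⟨a, ha⟩ := Submodule.mem_span_singleton.mp hxv
    obtain ⟨b, hb⟩ := Submodule.mem_span_singleton.mp hyv
    have ha0 : a ≠ 0 := fun h => hx0 (by rw [← ha, h, zero_smul])
    have hb0 : b ≠ 0 := fun h => hy0 (by rw [← hb, h, zero_smul])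
    have hspw : Submodule.span ℂ {w} = Submodule.span ℂ {v} := by
      rw [← hl]; exact spansmul l v hl0
    left
    constructor
    · rw [mapv, ← ha]; exact spansmul a v ha0
    · rw [mapw, ← hb, hspw]; exact spansmul b v hb0
  · -- independent case
    have hdep' : v ∉ Submodule.span ℂ {w} := by
      intro hmem
      obtain ⟨m, hm⟩ := Submodule.mem_span_singleton.mp hmem
      have hm0 : m ≠ 0 := fun h => hv (by rw [← hm, h, zero_smul])
      exact hdep (Submodule.mem_span_singleton.mpr ⟨m⁻¹, by rw [← hm, smul_smul, inv_mul_cancel₀ hm0, one_smul]⟩)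
    obtain ⟨f, hfw, hfp⟩ := Submodule.exists_dual_map_eq_bot_of_notMem hdep inferInstance
    obtain ⟨h, hhv, hhp⟩ := Submodule.exists_dual_map_eq_bot_of_notMem hdep' inferInstance
    -- f w ≠ 0, f v = 0 ; h v ≠ 0, h w = 0
    have hfv : f v = 0 := by
      have : f v ∈ Submodule.map f (Submodule.span ℂ {v}) :=
        ⟨v, Submodule.mem_span_singleton_self v, rfl⟩
      rw [hfp] at this; simpa using this
    have hhw : h w = 0 := by
      have : h w ∈ Submodule.map h (Submodule.span ℂ {w}) :=
        ⟨w, Submodule.mem_span_singleton_self w, rfl⟩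
      rw [hhp] at this; simpa using this
    -- x, y ∈ span {v, w}
    have hxm : x ∈ Submodule.span ℂ {v, w} := aux_mem_span x y v w hy0 c hc
    have hym : y ∈ Submodule.span ℂ {v, w} :=
      aux_mem_span y x v w hx0 c (by rw [add_comm]; exact hc)
    obtain ⟨a, b, hab⟩ := Submodule.mem_span_pair.mp hxm
    obtain ⟨p, q, hpq⟩ := Submodule.mem_span_pair.mp hym
    -- coordinates
    have hhx : h x = a * h v := by rw [← hab]; simp [hhw]
    have hhy : h y = p * h v := by rw [← hpq]; simp [hhw]
    have hfx : f x = b * f w := by rw [← hab]; simp [hfv]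
    have hfy : f y = q * f w := by rw [← hpq]; simp [hfv]
    -- apply h ⊗ h and f ⊗ f
    have Eh := congrArg (fun t => (TensorProduct.lid ℂ ℂ) (TensorProduct.map h h t)) hc
    have Ef := congrArg (fun t => (TensorProduct.lid ℂ ℂ) (TensorProduct.map f f t)) hc
    simp only [map_add, map_smul, TensorProduct.map_tmul, TensorProduct.lid_tmul,
      smul_eq_mul, hhx, hhy, hhw, hfx, hfy, hfv] at Eh Ef
    have hap : a * p = 0 := by
      have h1 : (2 : ℂ) * (a * p) * (h v * h v) = 0 := by rw [← hxdef, ← hydef, hhx, hhy] at Eh; linear_combination Eh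
      have h2 := mul_eq_zero.mp h1
      rcases h2 with h2 | h2
      · rcases mul_eq_zero.mp h2 with h3 | h3
        · norm_num at h3
        · exact h3
      · exact absurd h2 (mul_ne_zero hhv hhv)
    have hbq : b * q = 0 := by
      have h1 : (2 : ℂ) * (b * q) * (f w * f w) = 0 := by rw [← hxdef, ← hydef, hfx, hfy] at Ef; linear_combination Ef
      have h2 := mul_eq_zero.mp h1
      rcases h2 with h2 | h2
      · rcases mul_eq_zero.mp h2 with h3 | h3
        · norm_num at h3
        · exact h3
      · exact absurd h2 (mul_ne_zero hfw hfw)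
    by_cases ha0 : a = 0
    · -- x = b • w, y = p • v
      have hb0 : b ≠ 0 := by
        intro hb
        exact hx0 (by rw [← hab, ha0, hb, zero_smul, zero_smul, add_zero])
      have hq0 : q = 0 := (mul_eq_zero.mp hbq).resolve_left hb0
      have hp0 : p ≠ 0 := by
        intro hp
        exact hy0 (by rw [← hpq, hp, hq0, zero_smul, zero_smul, add_zero])
      right
      constructor
      · rw [mapv]
        have : x = b • w := by rw [← hab, ha0, zero_smul, zero_add]
        rw [this]; exact spansmul b w hb0
      · rw [mapw]
        have : y = p • v := by rw [← hpq, hq0, zero_smul, add_zero]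
        rw [this]; exact spansmul p v hp0
    · -- a ≠ 0 : p = 0, y = q • w, then q ≠ 0, b = 0
      have hp0 : p = 0 := (mul_eq_zero.mp hap).resolve_left ha0
      have hq0 : q ≠ 0 := by
        intro hq
        exact hy0 (by rw [← hpq, hp0, hq, zero_smul, zero_smul, add_zero])
      have hb0 : b = 0 := (mul_eq_zero.mp hbq).resolve_right hq0
      left
      constructor
      · rw [mapv]
        have : x = a • v := by rw [← hab, hb0, zero_smul, add_zero]
        rw [this]; exact spansmul a v ha0
      · rw [mapw]
        have : y = q • w := by rw [← hpq, hp0, zero_smul, zero_add]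
        rw [this]; exact spansmul q w hq0
end

section
/- Let G = (ℤ/3) × D₄, where D₄ is the dihedral group of order 8 with rotation r of order 4 and reflection s, and let ω be a generator of ℤ/3 written multiplicatively. Set x₁ = (1, s), x₂ = (1, s r³), x₃ = (ω², r²), x₄ = (ω, r³) and σ = (1, r²). Then: (i) x₁ x₂ x₃ x₄ = 1; (ii) x₁, x₂, x₃, x₄ generate G; (iii) the orders of x₁, x₂, x₃, x₄ are 2, 2, 6, 12 respectively; (iv) σ is a central involution of G with σ ∈ ⟨x₃⟩ and σ ∈ ⟨x₄⟩ but σ ∉ ⟨x₁⟩ and σ ∉ ⟨x₂⟩, so that Σ_{i : σ ∈ ⟨xᵢ⟩} |G|/ord(xᵢ) = 24/6 + 24/12 = 6; (v) |G| · (−2 + Σ_{i=1}^{4}(1 − 1/ord(xᵢ))) = 18 = 2·10 − 2. -/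
/-- The group `G = (ℤ/3) × D₄` of order 24 (the group `G(24,10)`), where `D₄` is the
dihedral group of order 8 and `ℤ/3` is written multiplicatively. -/
abbrev G2410 : Type := Multiplicative (ZMod 3) × DihedralGroup 4

/-- The generator `ω` of the (multiplicatively written) `ℤ/3` factor. -/
def ωgen : Multiplicative (ZMod 3) := Multiplicative.ofAdd (1 : ZMod 3)

/-- The rotation `r` of order 4 in the dihedral group `D₄` of order 8. -/
def rD4 : DihedralGroup 4 := DihedralGroup.r 1

/-- A reflection `s` in the dihedral group `D₄` of order 8. -/
def sD4 : DihedralGroup 4 := DihedralGroup.sr 0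

/-- With `x₁ = (1, s)`, `x₂ = (1, s r³)`, `x₃ = (ω², r²)`,
`x₄ = (ω, r³)` and `σ = (1, r²)` in `G = (ℤ/3) × D₄`: (i) `x₁x₂x₃x₄ = 1`;
(ii) the `xᵢ` generate `G`; (iii) their orders are 2, 2, 6, 12; (iv) `σ` is a central
involution lying in `⟨x₃⟩` and `⟨x₄⟩` but not in `⟨x₁⟩` or `⟨x₂⟩`, so
`Σ_{i : σ∈⟨xᵢ⟩} |G|/ord(xᵢ) = 24/6 + 24/12 = 6`;
(v) `|G|·(−2 + Σᵢ(1 − 1/ord(xᵢ))) = 18 = 2·10 − 2`. -/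
theorem Z3_x_D4_prym_datum :
    let x₁ : G2410 := (1, sD4)
    let x₂ : G2410 := (1, sD4 * rD4 ^ 3)
    let x₃ : G2410 := (ωgen ^ 2, rD4 ^ 2)
    let x₄ : G2410 := (ωgen, rD4 ^ 3)
    let σ : G2410 := (1, rD4 ^ 2)
    x₁ * x₂ * x₃ * x₄ = 1 ∧
    Subgroup.closure {x₁, x₂, x₃, x₄} = (⊤ : Subgroup G2410) ∧
    orderOf x₁ = 2 ∧ orderOf x₂ = 2 ∧ orderOf x₃ = 6 ∧ orderOf x₄ = 12 ∧
    σ ∈ Subgroup.center G2410 ∧ orderOf σ = 2 ∧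
    σ ∈ Subgroup.zpowers x₃ ∧ σ ∈ Subgroup.zpowers x₄ ∧
    σ ∉ Subgroup.zpowers x₁ ∧ σ ∉ Subgroup.zpowers x₂ ∧
    Nat.card G2410 / orderOf x₃ + Nat.card G2410 / orderOf x₄ = 6 ∧
    (Nat.card G2410 : ℚ) * (-2 + ((1 - 1 / (orderOf x₁ : ℚ)) + (1 - 1 / (orderOf x₂ : ℚ))
      + (1 - 1 / (orderOf x₃ : ℚ)) + (1 - 1 / (orderOf x₄ : ℚ)))) = 18 ∧
    (18 : ℚ) = 2 * 10 - 2 := by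
  intro x₁ x₂ x₃ x₄ σ
  have h1 : orderOf x₁ = 2 := (orderOf_eq_iff (by norm_num)).2 (by decide)
  have h2 : orderOf x₂ = 2 := (orderOf_eq_iff (by norm_num)).2 (by decide)
  have h3 : orderOf x₃ = 6 := (orderOf_eq_iff (by norm_num)).2 (by decide)
  have h4 : orderOf x₄ = 12 := (orderOf_eq_iff (by norm_num)).2 (by decide)
  have hcard : Nat.card G2410 = 24 := by rw [Nat.card_eq_fintype_card]; decide
  refine ⟨by decide, ?_, h1, h2, h3, h4, Subgroup.mem_center_iff.2 (by decide),
    (orderOf_eq_iff (by norm_num)).2 (by decide), ⟨3, by decide⟩, ⟨6, by decide⟩,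
    ?_, ?_, by rw [hcard, h3, h4], by rw [hcard, h1, h2, h3, h4]; norm_num, by norm_num⟩
  · set S : Set G2410 := {x₁, x₂, x₃, x₄}
    rw [eq_top_iff]
    have hs : ((1, sD4) : G2410) ∈ Subgroup.closure S := Subgroup.subset_closure (by left; rfl)
    have hr : ((1, rD4) : G2410) ∈ Subgroup.closure S := by
      have h : ((1, rD4) : G2410) = (x₁ * x₂) ^ 3 := by decide
      rw [h]
      exact pow_mem (mul_mem hs (Subgroup.subset_closure (by right; left; rfl))) 3
    have hw : ((ωgen, 1) : G2410) ∈ Subgroup.closure S := by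
      have h : ((ωgen, 1) : G2410) = x₃ ^ 2 := by decide
      rw [h]
      exact pow_mem (Subgroup.subset_closure (by right; right; left; rfl)) 2
    rintro ⟨a, d⟩ -
    obtain ⟨m, hm⟩ : ∃ m : Fin 3, ωgen ^ (m : ℕ) = a := by revert a; decide
    obtain ⟨i, j, hij⟩ : ∃ i : Fin 2, ∃ j : Fin 4, sD4 ^ (i : ℕ) * rD4 ^ (j : ℕ) = d := by
      revert d; decide
    have : ((a, d) : G2410) = ((ωgen, 1) : G2410) ^ (m : ℕ) *
        (((1, sD4) : G2410) ^ (i : ℕ) * ((1, rD4) : G2410) ^ (j : ℕ)) := by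
      rw [← hm, ← hij]; ext <;> simp
    rw [this]
    exact mul_mem (pow_mem hw _) (mul_mem (pow_mem hs _) (pow_mem hr _))
  · rw [mem_zpowers_iff_mem_range_orderOf, h1]; decide
  · rw [mem_zpowers_iff_mem_range_orderOf, h2]; decide
end
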